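/- arXiv:2603.04015 — 2 statements merged into one kernel-verified Lean document; each statement's English description precedes it below -/
import Mathlib

section
/- Every standard model for (Σ, Φ) is elementarily equivalent to a countable standard model for (Σ, Φ). -/
/-! ### First-order logic with inductively defined predicates (FOL_ID) -/

/-- A first-order signature with ordinary and inductive predicate symbols. -/
structure Signature : Type 1 where
  Func : Type
  arF : Func → ℕ
  Pred : Type
  arP : Pred → ℕ
  IndPred : Type
  arI : IndPred → ℕ

/-- Terms over a signature. -/
inductive Tm (S : Signature) : Type
  | var : ℕ → Tm S
  | func (f : S.Func) : (Fin (S.arF f) → Tm S) → Tm S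

/-- Formulas of FOL_ID. -/
inductive Fm (S : Signature) : Type
  | fals : Fm S
  | eq : Tm S → Tm S → Fm S
  | pred (Q : S.Pred) : (Fin (S.arP Q) → Tm S) → Fm S
  | ind (P : S.IndPred) : (Fin (S.arI P) → Tm S) → Fm S
  | not : Fm S → Fm S
  | and : Fm S → Fm S → Fm S
  | or : Fm S → Fm S → Fm S
  | imp : Fm S → Fm S → Fm S
  | all : ℕ → Fm S → Fm S
  | ex : ℕ → Fm S → Fm S

/-- A first-order structure for a signature. -/
structure Struc (S : Signature) : Type 1 where
  U : Type
  interpF (f : S.Func) : (Fin (S.arF f) → U) → U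
  interpP (Q : S.Pred) : Set (Fin (S.arP Q) → U)
  interpI : Set ((P : S.IndPred) × (Fin (S.arI P) → U))

/-- Evaluation of terms. -/
def Tm.eval {S : Signature} (M : Struc S) (ρ : ℕ → M.U) : Tm S → M.U
  | .var n => ρ n
  | .func f ts => M.interpF f (fun i => (ts i).eval M ρ)

/-- Update of a variable assignment. -/
def update {α : Type} (ρ : ℕ → α) (n : ℕ) (a : α) : ℕ → α :=
  fun m => if m = n then a else ρ m

/-- Tarskian satisfaction. -/
def Sat {S : Signature} (M : Struc S) (ρ : ℕ → M.U) : Fm S → Prop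
  | .fals => False
  | .eq t u => t.eval M ρ = u.eval M ρ
  | .pred Q ts => (fun i => (ts i).eval M ρ) ∈ M.interpP Q
  | .ind P ts => ⟨P, fun i => (ts i).eval M ρ⟩ ∈ M.interpI
  | .not A => ¬ Sat M ρ A
  | .and A B => Sat M ρ A ∧ Sat M ρ B
  | .or A B => Sat M ρ A ∨ Sat M ρ B
  | .imp A B => Sat M ρ A → Sat M ρ B
  | .all n A => ∀ a : M.U, Sat M (update ρ n a) A
  | .ex n A => ∃ a : M.U, Sat M (update ρ n a) A

/-- Free variables of a term. -/
def Tm.fv {S : Signature} : Tm S → Finset ℕ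
  | .var n => {n}
  | .func _ ts => Finset.univ.biUnion (fun i => (ts i).fv)

/-- Free variables of a formula. -/
def Fm.fv {S : Signature} : Fm S → Finset ℕ
  | .fals => ∅
  | .eq t u => t.fv ∪ u.fv
  | .pred _ ts => Finset.univ.biUnion (fun i => (ts i).fv)
  | .ind _ ts => Finset.univ.biUnion (fun i => (ts i).fv)
  | .not A => A.fv
  | .and A B => A.fv ∪ B.fv
  | .or A B => A.fv ∪ B.fv
  | .imp A B => A.fv ∪ B.fv
  | .all n A => A.fv.erase n
  | .ex n A => A.fv.erase n

/-- Simultaneous substitution on terms. -/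
def Tm.subst {S : Signature} (σ : ℕ → Tm S) : Tm S → Tm S
  | .var n => σ n
  | .func f ts => .func f (fun i => (ts i).subst σ)

/-- Substitution of a (closed) term for a variable in a formula. -/
def Fm.substC {S : Signature} (x : ℕ) (t : Tm S) : Fm S → Fm S
  | .fals => .fals
  | .eq a b => .eq (a.subst (fun n => if n = x then t else .var n))
      (b.subst (fun n => if n = x then t else .var n))
  | .pred Q ts => .pred Q (fun i => (ts i).subst (fun n => if n = x then t else .var n))
  | .ind P ts => .ind P (fun i => (ts i).subst (fun n => if n = x then t else .var n))
  | .not A => .not (A.substC x t)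
  | .and A B => .and (A.substC x t) (B.substC x t)
  | .or A B => .or (A.substC x t) (B.substC x t)
  | .imp A B => .imp (A.substC x t) (B.substC x t)
  | .all n A => if n = x then .all n A else .all n (A.substC x t)
  | .ex n A => if n = x then .ex n A else .ex n (A.substC x t)

/-- A production rule for inductive predicates. -/
structure ProdRule (S : Signature) : Type where
  concl : S.IndPred
  conclArgs : Fin (S.arI concl) → Tm S
  ordPrems : List ((Q : S.Pred) × (Fin (S.arP Q) → Tm S))
  indPrems : List ((P : S.IndPred) × (Fin (S.arI P) → Tm S))

/-- The monotone operator determined by a set of production rules over a structure. -/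
def step {S : Signature} (M : Struc S) (Φ : List (ProdRule S))
    (X : Set ((P : S.IndPred) × (Fin (S.arI P) → M.U))) :
    Set ((P : S.IndPred) × (Fin (S.arI P) → M.U)) :=
  { v | ∃ r ∈ Φ, ∃ ρ : ℕ → M.U,
      (∀ q ∈ r.ordPrems, (fun i => (q.2 i).eval M ρ) ∈ M.interpP q.1) ∧
      (∀ p ∈ r.indPrems, ⟨p.1, fun i => (p.2 i).eval M ρ⟩ ∈ X) ∧
      v = ⟨r.concl, fun i => (r.conclArgs i).eval M ρ⟩ }

theorem step_mono {S : Signature} (M : Struc S) (Φ : List (ProdRule S)) :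
    Monotone (step M Φ) := by
  rintro X Y h v ⟨r, hr, ρ, hq, hp, hv⟩
  exact ⟨r, hr, ρ, hq, fun p hp' => h (hp p hp'), hv⟩

/-- The operator for the production rules, as an order homomorphism. -/
def stepHom {S : Signature} (M : Struc S) (Φ : List (ProdRule S)) :
    Set ((P : S.IndPred) × (Fin (S.arI P) → M.U)) →o
      Set ((P : S.IndPred) × (Fin (S.arI P) → M.U)) :=
  ⟨step M Φ, step_mono M Φ⟩

/-- A structure is a standard model for `(S, Φ)` if it interprets the inductive
predicates by the least fixpoint of the operator for `Φ`. -/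
def Standard {S : Signature} (M : Struc S) (Φ : List (ProdRule S)) : Prop :=
  M.interpI = OrderHom.lfp (stepHom M Φ)

/-- The variables occurring in a production rule. -/
def ProdRule.vars {S : Signature} (r : ProdRule S) : Finset ℕ :=
  (Finset.univ.biUnion fun i => (r.conclArgs i).fv) ∪
    (r.ordPrems.foldr (fun q s => s ∪ Finset.univ.biUnion fun i => (q.2 i).fv) ∅) ∪
    (r.indPrems.foldr (fun p s => s ∪ Finset.univ.biUnion fun i => (p.2 i).fv) ∅)

def bigAnd {S : Signature} : List (Fm S) → Fm S
  | [] => .not .fals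
  | A :: l => .and A (bigAnd l)

def bigOr {S : Signature} : List (Fm S) → Fm S
  | [] => .fals
  | A :: l => .or A (bigOr l)

def exList {S : Signature} : List ℕ → Fm S → Fm S
  | [], A => A
  | n :: l, A => .ex n (exList l A)

/-- The `k`-fold syntactic unfolding `P^{(k)}(t⃗)` of an inductive predicate:
`P^{(0)}(t⃗) ≡ ⊥` and `P^{(k+1)}(t⃗)` is the disjunction, over production rules with
conclusion `P t⃗₀`, of `∃y⃗ (t⃗ = t⃗₀ ∧ ⋀ Q_l u⃗_l ∧ ⋀ P_{j_p}^{(k)}(t⃗_p))`, with the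
rule variables `y⃗` renamed to be fresh for `t⃗`. -/
def unfold {S : Signature} [DecidableEq S.IndPred] (Φ : List (ProdRule S)) :
    ℕ → (P : S.IndPred) → (Fin (S.arI P) → Tm S) → Fm S
  | 0, _, _ => .fals
  | (k+1), P, ts =>
    bigOr (Φ.map fun r =>
      if h : r.concl = P then
        let N : ℕ := ((Finset.univ.biUnion fun i => (ts i).fv).sup id) + 1
        let σ : ℕ → Tm S := fun n => .var (n + N)
        exList ((r.vars.sort (· ≤ ·)).map (· + N))
          (.and (bigAnd ((List.finRange (S.arI P)).map fun i =>
              .eq (ts i) (((h ▸ r.conclArgs) i).subst σ)))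
            (.and (bigAnd (r.ordPrems.map fun q => .pred q.1 fun i => (q.2 i).subst σ))
              (bigAnd (r.indPrems.map fun p => unfold Φ k p.1 fun i => (p.2 i).subst σ))))
      else .fals)


section Countability
variable {S : Signature}

noncomputable def encTm (eF : S.Func → ℕ) : Tm S → ℕ
  | .var n => Nat.pair 0 n
  | .func f ts => Nat.pair 1 (Nat.pair (eF f)
      (Encodable.encode (List.ofFn fun i => encTm eF (ts i))))

theorem encTm_inj {eF : S.Func → ℕ} (hF : Function.Injective eF) :
    ∀ t u : Tm S, encTm eF t = encTm eF u → t = u := by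
  intro t
  induction t with
  | var n =>
    intro u h
    cases u with
    | var m => simp [encTm, Nat.pair_eq_pair] at h; simp [h]
    | func g us => simp [encTm, Nat.pair_eq_pair] at h
  | func f ts ih =>
    intro u h
    cases u with
    | var m => simp [encTm, Nat.pair_eq_pair] at h
    | func g us =>
      simp only [encTm, Nat.pair_eq_pair, true_and] at h
      obtain ⟨hfg, hl⟩ := h
      obtain rfl : f = g := hF hfg
      have hl' := Encodable.encode_injective hl
      rw [List.ofFn_inj] at hl'
      have : ts = us := funext fun i => ih i (us i) (congrFun hl' i)
      rw [this]

instance [Countable S.Func] : Countable (Tm S) := by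
  obtain ⟨eF, hF⟩ := exists_injective_nat S.Func
  exact ⟨⟨encTm eF, fun t u h => encTm_inj hF t u h⟩⟩

noncomputable def encFm (eT : Tm S → ℕ) (eP : S.Pred → ℕ) (eI : S.IndPred → ℕ) : Fm S → ℕ
  | .fals => Nat.pair 0 0
  | .eq t u => Nat.pair 1 (Nat.pair (eT t) (eT u))
  | .pred Q ts => Nat.pair 2 (Nat.pair (eP Q) (Encodable.encode (List.ofFn fun i => eT (ts i))))
  | .ind P ts => Nat.pair 3 (Nat.pair (eI P) (Encodable.encode (List.ofFn fun i => eT (ts i))))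
  | .not A => Nat.pair 4 (encFm eT eP eI A)
  | .and A B => Nat.pair 5 (Nat.pair (encFm eT eP eI A) (encFm eT eP eI B))
  | .or A B => Nat.pair 6 (Nat.pair (encFm eT eP eI A) (encFm eT eP eI B))
  | .imp A B => Nat.pair 7 (Nat.pair (encFm eT eP eI A) (encFm eT eP eI B))
  | .all n A => Nat.pair 8 (Nat.pair n (encFm eT eP eI A))
  | .ex n A => Nat.pair 9 (Nat.pair n (encFm eT eP eI A))

theorem encFm_inj {eT : Tm S → ℕ} {eP : S.Pred → ℕ} {eI : S.IndPred → ℕ}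
    (hT : Function.Injective eT) (hP : Function.Injective eP)
    (hI : Function.Injective eI) :
    ∀ A B : Fm S, encFm eT eP eI A = encFm eT eP eI B → A = B := by
  intro A
  induction A with
  | fals => intro B h; cases B <;> simp [encFm, Nat.pair_eq_pair] at h; rfl
  | eq t u =>
    intro B h; cases B <;> simp [encFm, Nat.pair_eq_pair] at h
    obtain ⟨h1, h2⟩ := h
    rw [hT h1, hT h2]
  | pred Q ts =>
    intro B h; cases B <;> simp [encFm, Nat.pair_eq_pair] at h
    obtain ⟨h1, h2⟩ := h
    obtain rfl := hP h1
    rw [List.ofFn_inj] at h2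
    have : ts = _ := funext fun i => hT (congrFun h2 i)
    rw [this]
  | ind P ts =>
    intro B h; cases B <;> simp [encFm, Nat.pair_eq_pair] at h
    obtain ⟨h1, h2⟩ := h
    obtain rfl := hI h1
    rw [List.ofFn_inj] at h2
    have : ts = _ := funext fun i => hT (congrFun h2 i)
    rw [this]
  | not A ih =>
    intro B h; cases B <;> simp [encFm, Nat.pair_eq_pair] at h
    rw [ih _ h]
  | and A B ihA ihB =>
    intro C h; cases C <;> simp [encFm, Nat.pair_eq_pair] at h
    rw [ihA _ h.1, ihB _ h.2]
  | or A B ihA ihB =>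
    intro C h; cases C <;> simp [encFm, Nat.pair_eq_pair] at h
    rw [ihA _ h.1, ihB _ h.2]
  | imp A B ihA ihB =>
    intro C h; cases C <;> simp [encFm, Nat.pair_eq_pair] at h
    rw [ihA _ h.1, ihB _ h.2]
  | all n A ih =>
    intro B h; cases B <;> simp [encFm, Nat.pair_eq_pair] at h
    rw [h.1, ih _ h.2]
  | ex n A ih =>
    intro B h; cases B <;> simp [encFm, Nat.pair_eq_pair] at h
    rw [h.1, ih _ h.2]

instance [Countable S.Func] [Countable S.Pred] [Countable S.IndPred] :
    Countable (Fm S) := by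
  obtain ⟨eT, hT⟩ := exists_injective_nat (Tm S)
  obtain ⟨eP, hP⟩ := exists_injective_nat S.Pred
  obtain ⟨eI, hI⟩ := exists_injective_nat S.IndPred
  exact ⟨⟨encFm eT eP eI, fun A B h => encFm_inj hT hP hI A B h⟩⟩

end Countability
section Semantics
variable {S : Signature} {M : Struc S}

theorem Tm.eval_congr {ρ ρ' : ℕ → M.U} :
    ∀ t : Tm S, (∀ n ∈ t.fv, ρ n = ρ' n) → t.eval M ρ = t.eval M ρ'
  | .var n, h => h n (by simp [Tm.fv])
  | .func f ts, h => by
    simp only [Tm.eval]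
    congr 1
    funext i
    exact Tm.eval_congr (ts i) fun n hn => h n (by simp [Tm.fv]; exact ⟨i, hn⟩)

theorem Sat_congr : ∀ (A : Fm S) {ρ ρ' : ℕ → M.U},
    (∀ n ∈ A.fv, ρ n = ρ' n) → (Sat M ρ A ↔ Sat M ρ' A) := by
  intro A
  induction A with
  | fals => intro ρ ρ' h; rfl
  | eq t u =>
    intro ρ ρ' h
    simp only [Sat]
    rw [Tm.eval_congr t fun n hn => h n (by simp [Fm.fv]; exact Or.inl hn),
      Tm.eval_congr u fun n hn => h n (by simp [Fm.fv]; exact Or.inr hn)]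
  | pred Q ts =>
    intro ρ ρ' h
    simp only [Sat]
    have : (fun i => (ts i).eval M ρ) = fun i => (ts i).eval M ρ' :=
      funext fun i => Tm.eval_congr (ts i) fun n hn => h n (by simp [Fm.fv]; exact ⟨i, hn⟩)
    rw [this]
  | ind P ts =>
    intro ρ ρ' h
    simp only [Sat]
    have : (fun i => (ts i).eval M ρ) = fun i => (ts i).eval M ρ' :=
      funext fun i => Tm.eval_congr (ts i) fun n hn => h n (by simp [Fm.fv]; exact ⟨i, hn⟩)
    rw [this]
  | not A ih =>
    intro ρ ρ' h
    simp only [Sat]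
    rw [ih fun n hn => h n hn]
  | and A B ihA ihB =>
    intro ρ ρ' h
    simp only [Sat]
    rw [ihA fun n hn => h n (by simp [Fm.fv]; exact Or.inl hn),
      ihB fun n hn => h n (by simp [Fm.fv]; exact Or.inr hn)]
  | or A B ihA ihB =>
    intro ρ ρ' h
    simp only [Sat]
    rw [ihA fun n hn => h n (by simp [Fm.fv]; exact Or.inl hn),
      ihB fun n hn => h n (by simp [Fm.fv]; exact Or.inr hn)]
  | imp A B ihA ihB =>
    intro ρ ρ' h
    simp only [Sat]
    rw [ihA fun n hn => h n (by simp [Fm.fv]; exact Or.inl hn),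
      ihB fun n hn => h n (by simp [Fm.fv]; exact Or.inr hn)]
  | all n A ih =>
    intro ρ ρ' h
    simp only [Sat]
    refine forall_congr' fun a => ih fun m hm => ?_
    by_cases hmn : m = n
    · simp [update, hmn]
    · simp only [update, if_neg hmn]
      exact h m (by simp [Fm.fv, Finset.mem_erase]; exact ⟨hmn, hm⟩)
  | ex n A ih =>
    intro ρ ρ' h
    simp only [Sat]
    refine exists_congr fun a => ih fun m hm => ?_
    by_cases hmn : m = n
    · simp [update, hmn]
    · simp only [update, if_neg hmn]
      exact h m (by simp [Fm.fv, Finset.mem_erase]; exact ⟨hmn, hm⟩)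

theorem Tm.eval_subst {σ : ℕ → Tm S} {ρ : ℕ → M.U} :
    ∀ t : Tm S, (t.subst σ).eval M ρ = t.eval M (fun n => (σ n).eval M ρ)
  | .var n => rfl
  | .func f ts => by
    simp only [Tm.subst, Tm.eval]
    congr 1
    funext i
    exact Tm.eval_subst (ts i)

theorem sat_bigAnd {ρ : ℕ → M.U} : ∀ l : List (Fm S),
    (Sat M ρ (bigAnd l) ↔ ∀ A ∈ l, Sat M ρ A)
  | [] => by simp [bigAnd, Sat]
  | A :: l => by
    simp only [bigAnd, Sat, sat_bigAnd l, List.mem_cons]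
    constructor
    · rintro ⟨h1, h2⟩ B (rfl | hB)
      · exact h1
      · exact h2 _ hB
    · intro h; exact ⟨h _ (Or.inl rfl), fun B hB => h _ (Or.inr hB)⟩

theorem sat_bigOr {ρ : ℕ → M.U} : ∀ l : List (Fm S),
    (Sat M ρ (bigOr l) ↔ ∃ A ∈ l, Sat M ρ A)
  | [] => by simp [bigOr, Sat]
  | A :: l => by
    simp only [bigOr, Sat, sat_bigOr l, List.mem_cons]
    constructor
    · rintro (h | ⟨B, hB, h⟩)
      · exact ⟨A, Or.inl rfl, h⟩
      · exact ⟨B, Or.inr hB, h⟩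
    · rintro ⟨B, (rfl | hB), h⟩
      · exact Or.inl h
      · exact Or.inr ⟨B, hB, h⟩

theorem sat_exList {A : Fm S} : ∀ (xs : List ℕ) (ρ : ℕ → M.U),
    (Sat M ρ (exList xs A) ↔ ∃ ρ' : ℕ → M.U, (∀ n, n ∉ xs → ρ' n = ρ n) ∧ Sat M ρ' A)
  | [], ρ => by
    simp only [exList]
    constructor
    · intro h; exact ⟨ρ, fun n _ => rfl, h⟩
    · rintro ⟨ρ', h1, h2⟩
      have : ρ' = ρ := funext fun n => h1 n (by simp)
      rwa [this] at h2
  | n :: xs, ρ => by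
    simp only [exList, Sat]
    constructor
    · rintro ⟨a, h⟩
      obtain ⟨ρ', h1, h2⟩ := (sat_exList xs (update ρ n a)).1 h
      refine ⟨ρ', fun m hm => ?_, h2⟩
      rw [List.mem_cons, not_or] at hm
      rw [h1 m hm.2, update, if_neg hm.1]
    · rintro ⟨ρ', h1, h2⟩
      refine ⟨ρ' n, (sat_exList xs (update ρ n (ρ' n))).2 ⟨ρ', fun m hm => ?_, h2⟩⟩
      by_cases hmn : m = n
      · subst hmn; simp [update]
      · rw [update, if_neg hmn]
        exact h1 m (by simp [hmn, hm])

end Semantics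
section Kleene
variable {S : Signature}

/-- Bound finitely many memberships in a monotone chain of sets. -/
theorem list_bound {β γ : Type*} {s : ℕ → Set β} (hmono : ∀ k, s k ⊆ s (k+1))
    (g : γ → β) :
    ∀ l : List γ, (∀ p ∈ l, ∃ k, g p ∈ s k) → ∃ K, ∀ p ∈ l, g p ∈ s K := by
  have hm : ∀ {k k'}, k ≤ k' → s k ⊆ s k' := by
    intro k k' h
    induction h with
    | refl => exact fun _ h => h
    | step _ ih => exact fun x hx => hmono _ (ih hx)
  intro l
  induction l with
  | nil => intro _; exact ⟨0, by simp⟩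
  | cons p l ih =>
    intro h
    obtain ⟨K, hK⟩ := ih fun q hq => h q (List.mem_cons_of_mem _ hq)
    obtain ⟨k, hk⟩ := h p List.mem_cons_self
    refine ⟨max k K, fun q hq => ?_⟩
    rcases List.mem_cons.1 hq with rfl | hq
    · exact hm (le_max_left _ _) hk
    · exact hm (le_max_right _ _) (hK q hq)

variable (M : Struc S) (Φ : List (ProdRule S))

/-- Finite iterates of the step operator. -/
def iter (k : ℕ) : Set ((P : S.IndPred) × (Fin (S.arI P) → M.U)) :=
  (step M Φ)^[k] ∅

theorem iter_zero : iter M Φ 0 = ∅ := rfl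

theorem iter_succ (k : ℕ) : iter M Φ (k+1) = step M Φ (iter M Φ k) :=
  Function.iterate_succ_apply' _ _ _

theorem iter_mono_succ (k : ℕ) : iter M Φ k ⊆ iter M Φ (k+1) := by
  induction k with
  | zero => simp [iter_zero]
  | succ k ih =>
    rw [iter_succ, iter_succ]
    exact step_mono M Φ ih

theorem lfp_eq_iUnion :
    OrderHom.lfp (stepHom M Φ) = ⋃ k, iter M Φ k := by
  apply le_antisymm
  · apply OrderHom.lfp_le
    rintro v ⟨r, hr, ρ, hq, hp, hv⟩
    have : ∀ p ∈ r.indPrems, ∃ k,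
        (⟨p.1, fun i => (p.2 i).eval M ρ⟩ : (P : S.IndPred) × (Fin (S.arI P) → M.U))
          ∈ iter M Φ k := by
      intro p hp'
      exact Set.mem_iUnion.1 (hp p hp')
    obtain ⟨K, hK⟩ := list_bound (iter_mono_succ M Φ)
      (fun p : (P : S.IndPred) × (Fin (S.arI P) → Tm S) =>
        (⟨p.1, fun i => (p.2 i).eval M ρ⟩ : (P : S.IndPred) × (Fin (S.arI P) → M.U)))
      r.indPrems this
    refine Set.mem_iUnion.2 ⟨K + 1, ?_⟩
    rw [iter_succ]
    exact ⟨r, hr, ρ, hq, hK, hv⟩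
  · refine Set.iUnion_subset fun k => ?_
    induction k with
    | zero => simp [iter_zero]
    | succ k ih =>
      rw [iter_succ]
      calc step M Φ (iter M Φ k) ⊆ step M Φ (OrderHom.lfp (stepHom M Φ)) := step_mono M Φ ih
        _ = OrderHom.lfp (stepHom M Φ) := OrderHom.map_lfp (stepHom M Φ)

end Kleene

section RuleVars
variable {S : Signature}

theorem mem_foldr_union {γ : Type*} (bi : γ → Finset ℕ) :
    ∀ (l : List γ) (x : ℕ), (x ∈ l.foldr (fun q s => s ∪ bi q) ∅ ↔ ∃ q ∈ l, x ∈ bi q)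
  | [], x => by simp
  | q :: l, x => by
    simp only [List.foldr_cons, Finset.mem_union, mem_foldr_union bi l x, List.mem_cons]
    constructor
    · rintro (⟨p, hp, hx⟩ | hx)
      · exact ⟨p, Or.inr hp, hx⟩
      · exact ⟨q, Or.inl rfl, hx⟩
    · rintro ⟨p, (rfl | hp), hx⟩
      · exact Or.inr hx
      · exact Or.inl ⟨p, hp, hx⟩

theorem fv_conclArgs_subset (r : ProdRule S) (i : Fin (S.arI r.concl)) :
    (r.conclArgs i).fv ⊆ r.vars := by
  intro x hx
  simp only [ProdRule.vars, Finset.mem_union]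
  exact Or.inl (Or.inl (Finset.mem_biUnion.2 ⟨i, Finset.mem_univ _, hx⟩))

theorem fv_ordPrems_subset (r : ProdRule S) {q} (hq : q ∈ r.ordPrems)
    (i : Fin (S.arP q.1)) : (q.2 i).fv ⊆ r.vars := by
  intro x hx
  simp only [ProdRule.vars, Finset.mem_union]
  refine Or.inl (Or.inr ((mem_foldr_union _ _ _).2 ⟨q, hq, ?_⟩))
  exact Finset.mem_biUnion.2 ⟨i, Finset.mem_univ _, hx⟩

theorem fv_indPrems_subset (r : ProdRule S) {p} (hp : p ∈ r.indPrems)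
    (i : Fin (S.arI p.1)) : (p.2 i).fv ⊆ r.vars := by
  intro x hx
  simp only [ProdRule.vars, Finset.mem_union]
  refine Or.inr ((mem_foldr_union _ _ _).2 ⟨p, hp, ?_⟩)
  exact Finset.mem_biUnion.2 ⟨i, Finset.mem_univ _, hx⟩

end RuleVars
section Unfold
variable {S : Signature}

theorem sat_unfold [DecidableEq S.IndPred] (M : Struc S) (Φ : List (ProdRule S)) :
    ∀ (k : ℕ) (P : S.IndPred) (ts : Fin (S.arI P) → Tm S) (ρ : ℕ → M.U),
    Sat M ρ (unfold Φ k P ts) ↔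
      (⟨P, fun i => (ts i).eval M ρ⟩ : (Q : S.IndPred) × (Fin (S.arI Q) → M.U))
        ∈ iter M Φ k := by
  intro k
  induction k with
  | zero => intro P ts ρ; simp [unfold, Sat, iter_zero]
  | succ k ih =>
    intro P ts ρ
    rw [iter_succ]
    simp only [unfold]
    rw [sat_bigOr]
    set N : ℕ := ((Finset.univ.biUnion fun i => (ts i).fv).sup id) + 1 with hN
    set σ : ℕ → Tm S := fun n => .var (n + N) with hσ
    have hfvts : ∀ (i) (x : ℕ), x ∈ (ts i).fv → x < N := by
      intro i x hx
      have : x ∈ Finset.univ.biUnion fun i => (ts i).fv :=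
        Finset.mem_biUnion.2 ⟨i, Finset.mem_univ _, hx⟩
      have hle := Finset.le_sup (f := id) this
      simp only [id_eq] at hle
      omega
    constructor
    · rintro ⟨B, hB, hSat⟩
      rw [List.mem_map] at hB
      obtain ⟨r, hrΦ, rfl⟩ := hB
      by_cases h : r.concl = P
      · subst h
        rw [dif_pos rfl] at hSat
        obtain ⟨ρ', hρ', hBody⟩ := (sat_exList _ _).1 hSat
        simp only [Sat] at hBody
        obtain ⟨hEQ, hORD, hIND⟩ := hBody
        rw [sat_bigAnd] at hEQ hORD hIND
        have hρ'lt : ∀ m, m < N → ρ' m = ρ m := by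
          intro m hm
          apply hρ'
          intro hmem
          rw [List.mem_map] at hmem
          obtain ⟨n, _, rfl⟩ := hmem
          omega
        have hEQ' : ∀ i, (ts i).eval M ρ' = ((r.conclArgs i).subst σ).eval M ρ' := by
          intro i
          exact hEQ _ (List.mem_map.2 ⟨i, List.mem_finRange i, rfl⟩)
        refine ⟨r, hrΦ, fun n => ρ' (n + N), ?_, ?_, ?_⟩
        · intro q hq
          have := hORD _ (List.mem_map.2 ⟨q, hq, rfl⟩)
          simp only [Sat] at this
          have he : (fun i => ((q.2 i).subst σ).eval M ρ') =
              fun i => (q.2 i).eval M fun n => ρ' (n + N) :=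
            funext fun i => Tm.eval_subst (q.2 i)
          rwa [he] at this
        · intro p hp
          have := hIND _ (List.mem_map.2 ⟨p, hp, rfl⟩)
          rw [ih] at this
          have he : (fun i => ((p.2 i).subst σ).eval M ρ') =
              fun i => (p.2 i).eval M fun n => ρ' (n + N) :=
            funext fun i => Tm.eval_subst (p.2 i)
          rwa [he] at this
        · congr 1
          funext i
          have h1 : (ts i).eval M ρ = (ts i).eval M ρ' :=
            Tm.eval_congr (ts i) fun n hn => (hρ'lt n (hfvts i n hn)).symm
          rw [h1, hEQ' i]
          exact Tm.eval_subst _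
      · rw [dif_neg h] at hSat
        exact absurd hSat (by simp [Sat])
    · rintro ⟨r, hrΦ, ρ₀, hord, hind, heq⟩
      have h : r.concl = P := (congrArg (fun v => v.fst) heq).symm
      subst h
      have hargs : (fun i => (ts i).eval M ρ) = fun i => (r.conclArgs i).eval M ρ₀ := by
        simpa using heq
      refine ⟨_, List.mem_map.2 ⟨r, hrΦ, rfl⟩, ?_⟩
      rw [dif_pos rfl]
      set ρ' : ℕ → M.U :=
        fun m => if N ≤ m ∧ m - N ∈ r.vars then ρ₀ (m - N) else ρ m with hρ'def
      have c1 : ∀ m, m ∉ (r.vars.sort (· ≤ ·)).map (· + N) → ρ' m = ρ m := by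
        intro m hm
        rw [hρ'def]
        simp only
        rw [if_neg]
        rintro ⟨h1, h2⟩
        exact hm (List.mem_map.2 ⟨m - N, (Finset.mem_sort _).2 h2, by omega⟩)
      have c2 : ∀ n ∈ r.vars, ρ' (n + N) = ρ₀ n := by
        intro n hn
        rw [hρ'def]
        simp only
        rw [if_pos ⟨by omega, by simpa using hn⟩]
        simp
      have c3 : ∀ t : Tm S, t.fv ⊆ r.vars → (t.subst σ).eval M ρ' = t.eval M ρ₀ := by
        intro t ht
        rw [Tm.eval_subst]
        exact Tm.eval_congr t fun n hn => c2 n (ht hn)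
      have c4 : ∀ i, (ts i).eval M ρ' = (ts i).eval M ρ := by
        intro i
        refine Tm.eval_congr (ts i) fun n hn => ?_
        rw [hρ'def]
        simp only
        rw [if_neg]
        rintro ⟨h1, _⟩
        exact absurd (hfvts i n hn) (by omega)
      refine (sat_exList _ _).2 ⟨ρ', c1, ?_⟩
      simp only [Sat]
      refine ⟨(sat_bigAnd _).2 ?_, (sat_bigAnd _).2 ?_, (sat_bigAnd _).2 ?_⟩
      · intro B hB
        rw [List.mem_map] at hB
        obtain ⟨i, _, rfl⟩ := hB
        show (ts i).eval M ρ' = _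
        rw [c4 i, congrFun hargs i]
        exact (c3 _ (fv_conclArgs_subset r i)).symm
      · intro B hB
        rw [List.mem_map] at hB
        obtain ⟨q, hq, rfl⟩ := hB
        show (fun i => ((q.2 i).subst σ).eval M ρ') ∈ M.interpP q.1
        have he : (fun i => ((q.2 i).subst σ).eval M ρ') = fun i => (q.2 i).eval M ρ₀ :=
          funext fun i => c3 _ (fv_ordPrems_subset r hq i)
        rw [he]
        exact hord q hq
      · intro B hB
        rw [List.mem_map] at hB
        obtain ⟨p, hp, rfl⟩ := hB
        rw [ih]
        have he : (fun i => ((p.2 i).subst σ).eval M ρ') = fun i => (p.2 i).eval M ρ₀ :=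
          funext fun i => c3 _ (fv_indPrems_subset r hp i)
        rw [he]
        exact hind p hp

end Unfold
section Hull
variable {S : Signature} (M : Struc S)

theorem chain_mono {β : Type*} {s : ℕ → Set β} (h : ∀ k, s k ⊆ s (k+1)) {k k' : ℕ}
    (hk : k ≤ k') : s k ⊆ s k' := by
  induction hk with
  | refl => exact fun _ h => h
  | step _ ih => exact fun x hx => h _ (ih hx)

theorem countable_lists {α : Type*} {s : Set α} (hs : s.Countable) :
    {l : List α | ∀ x ∈ l, x ∈ s}.Countable := by
  haveI := hs.to_subtype
  have hsub : {l : List α | ∀ x ∈ l, x ∈ s} ⊆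
      Set.range (fun l : List s => l.map Subtype.val) := by
    intro l hl
    refine ⟨l.attach.map fun x => ⟨x.1, hl x.1 x.2⟩, ?_⟩
    simp [List.map_map, Function.comp]
  exact Set.Countable.mono hsub (Set.countable_range _)

open Classical in
noncomputable def skolem (c0 : M.U) (A : Fm S) (n : ℕ) (l : List M.U) : M.U :=
  if h : ∃ a, Sat M (update (fun i => l.getD i c0) n a) A then h.choose else c0

open Classical in
theorem skolem_spec (c0 : M.U) (A : Fm S) (n : ℕ) (l : List M.U)
    (h : ∃ a, Sat M (update (fun i => l.getD i c0) n a) A) :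
    Sat M (update (fun i => l.getD i c0) n (skolem M c0 A n l)) A := by
  rw [_root_.skolem, dif_pos h]
  exact h.choose_spec

def hullStage (c0 : M.U) : ℕ → Set M.U
  | 0 => {c0}
  | k+1 => (hullStage c0 k
      ∪ ⋃ f : S.Func, (fun v => M.interpF f v) '' {v | ∀ i, v i ∈ hullStage c0 k})
      ∪ ⋃ p : Fm S × ℕ, (fun l => skolem M c0 p.1 p.2 l) '' {l | ∀ x ∈ l, x ∈ hullStage c0 k}

def hull (c0 : M.U) : Set M.U := ⋃ k, hullStage M c0 k

theorem hullStage_mono (c0 : M.U) (k : ℕ) : hullStage M c0 k ⊆ hullStage M c0 (k+1) :=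
  fun _ hx => Or.inl (Or.inl hx)

theorem hullStage_countable [Countable S.Func] [Countable S.Pred] [Countable S.IndPred]
    (c0 : M.U) : ∀ k, (hullStage M c0 k).Countable
  | 0 => Set.countable_singleton _
  | k+1 => by
    have ih := hullStage_countable c0 k
    refine (Set.Countable.union (Set.Countable.union ih ?_) ?_)
    · exact Set.countable_iUnion fun f => Set.Countable.image (Set.countable_pi fun _ => ih) _
    · exact Set.countable_iUnion fun p => Set.Countable.image (countable_lists ih) _

theorem hull_countable [Countable S.Func] [Countable S.Pred] [Countable S.IndPred]
    (c0 : M.U) : (hull M c0).Countable :=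
  Set.countable_iUnion (hullStage_countable M c0)

theorem c0_mem_hull (c0 : M.U) : c0 ∈ hull M c0 :=
  Set.mem_iUnion.2 ⟨0, rfl⟩

theorem hull_closedF (c0 : M.U) (f : S.Func) (v : Fin (S.arF f) → M.U)
    (hv : ∀ i, v i ∈ hull M c0) : M.interpF f v ∈ hull M c0 := by
  have h1 : ∀ i, ∃ k, v i ∈ hullStage M c0 k := fun i => Set.mem_iUnion.1 (hv i)
  choose g hg using h1
  have hK : ∀ i, v i ∈ hullStage M c0 (Finset.univ.sup g) := fun i =>
    chain_mono (hullStage_mono M c0) (Finset.le_sup (Finset.mem_univ i)) (hg i)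
  exact Set.mem_iUnion.2 ⟨Finset.univ.sup g + 1,
    Or.inl (Or.inr (Set.mem_iUnion.2 ⟨f, ⟨v, hK, rfl⟩⟩))⟩

theorem hull_witness (c0 : M.U) (A : Fm S) (n : ℕ) (ρ : ℕ → M.U)
    (hρ : ∀ i, ρ i ∈ hull M c0) (hex : ∃ a, Sat M (update ρ n a) A) :
    ∃ a ∈ hull M c0, Sat M (update ρ n a) A := by
  set N : ℕ := (A.fv.sup id) + 1 with hNdef
  set l : List M.U := (List.range N).map ρ with hldef
  have hl : ∀ x ∈ l, ∃ k, x ∈ hullStage M c0 k := by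
    intro x hx
    rw [hldef, List.mem_map] at hx
    obtain ⟨i, _, rfl⟩ := hx
    exact Set.mem_iUnion.1 (hρ i)
  obtain ⟨K, hK⟩ := list_bound (hullStage_mono M c0) (fun x : M.U => x) l hl
  have hgetD : ∀ i, i < N → l.getD i c0 = ρ i := by
    intro i hi
    rw [hldef]
    rw [List.getD_eq_getElem?_getD, List.getElem?_map, List.getElem?_range hi]
    rfl
  have hagree : ∀ a : M.U, ∀ m ∈ A.fv, update ρ n a m = update (fun i => l.getD i c0) n a m := by
    intro a m hm
    by_cases hmn : m = n
    · simp [update, hmn]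
    · have hle := Finset.le_sup (f := id) hm
      simp only [id_eq] at hle
      simp only [update, if_neg hmn]
      exact (hgetD m (by omega)).symm
  obtain ⟨a, ha⟩ := hex
  have hex' : ∃ a, Sat M (update (fun i => l.getD i c0) n a) A :=
    ⟨a, (Sat_congr A (hagree a)).1 ha⟩
  refine ⟨skolem M c0 A n l, ?_, ?_⟩
  · exact Set.mem_iUnion.2 ⟨K+1, Or.inr (Set.mem_iUnion.2 ⟨(A, n), ⟨l, hK, rfl⟩⟩)⟩
  · exact (Sat_congr A (hagree _)).2 (skolem_spec M c0 A n l hex')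

noncomputable def hullStruc (c0 : M.U) : Struc S where
  U := ↥(hull M c0)
  interpF f v := ⟨M.interpF f fun i => (v i).1, hull_closedF M c0 f _ fun i => (v i).2⟩
  interpP Q := {v | (fun i => (v i).1) ∈ M.interpP Q}
  interpI := {v | (⟨v.1, fun i => (v.2 i).1⟩ : (P : S.IndPred) × (Fin (S.arI P) → M.U))
    ∈ M.interpI}

theorem eval_hull (c0 : M.U) (ρ : ℕ → (hullStruc M c0).U) :
    ∀ t : Tm S, (Tm.eval (hullStruc M c0) ρ t).1 = Tm.eval M (fun n => (ρ n).1) t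
  | .var n => rfl
  | .func f ts => by
    simp only [Tm.eval]
    show M.interpF f _ = M.interpF f _
    congr 1
    funext i
    exact eval_hull c0 ρ (ts i)

theorem sat_hull (c0 : M.U) : ∀ (A : Fm S) (ρ : ℕ → (hullStruc M c0).U),
    Sat (hullStruc M c0) ρ A ↔ Sat M (fun n => (ρ n).1) A := by
  intro A
  have hupd : ∀ (ρ : ℕ → (hullStruc M c0).U) (n : ℕ) (a : (hullStruc M c0).U),
      (fun m => (update ρ n a m).1) = update (fun m => (ρ m).1) n a.1 := by
    intro ρ n a
    funext m
    by_cases hmn : m = n <;> simp [update, hmn]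
  induction A with
  | fals => intro ρ; exact Iff.rfl
  | eq t u =>
    intro ρ
    simp only [Sat]
    rw [← eval_hull M c0 ρ t, ← eval_hull M c0 ρ u]
    exact Subtype.ext_iff
  | pred Q ts =>
    intro ρ
    simp only [Sat]
    show (fun i => (Tm.eval (hullStruc M c0) ρ (ts i)).1) ∈ M.interpP Q ↔ _
    rw [show (fun i => (Tm.eval (hullStruc M c0) ρ (ts i)).1)
        = fun i => Tm.eval M (fun n => (ρ n).1) (ts i) from
      funext fun i => eval_hull M c0 ρ (ts i)]
  | ind P ts =>
    intro ρ
    simp only [Sat]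
    show (⟨P, fun i => (Tm.eval (hullStruc M c0) ρ (ts i)).1⟩ :
        (P : S.IndPred) × (Fin (S.arI P) → M.U)) ∈ M.interpI ↔ _
    rw [show (fun i => (Tm.eval (hullStruc M c0) ρ (ts i)).1)
        = fun i => Tm.eval M (fun n => (ρ n).1) (ts i) from
      funext fun i => eval_hull M c0 ρ (ts i)]
  | not A ih =>
    intro ρ
    simp only [Sat]
    rw [ih ρ]
  | and A B ihA ihB =>
    intro ρ
    simp only [Sat]
    rw [ihA ρ, ihB ρ]
  | or A B ihA ihB =>
    intro ρ
    simp only [Sat]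
    rw [ihA ρ, ihB ρ]
  | imp A B ihA ihB =>
    intro ρ
    simp only [Sat]
    rw [ihA ρ, ihB ρ]
  | all n A ih =>
    intro ρ
    simp only [Sat]
    constructor
    · intro h b
      by_contra hb
      have hex : ∃ a, Sat M (update (fun m => (ρ m).1) n a) (Fm.not A) := ⟨b, hb⟩
      obtain ⟨a, haH, hna⟩ := hull_witness M c0 (Fm.not A) n _ (fun i => (ρ i).2) hex
      have := (ih (update ρ n ⟨a, haH⟩)).1 (h ⟨a, haH⟩)
      rw [hupd ρ n ⟨a, haH⟩] at this
      exact hna this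
    · intro h a
      refine (ih (update ρ n a)).2 ?_
      rw [hupd ρ n a]
      exact h a.1
  | ex n A ih =>
    intro ρ
    simp only [Sat]
    constructor
    · rintro ⟨a, ha⟩
      refine ⟨a.1, ?_⟩
      have := (ih (update ρ n a)).1 ha
      rwa [hupd ρ n a] at this
    · rintro ⟨b, hb⟩
      obtain ⟨a, haH, hsa⟩ := hull_witness M c0 A n _ (fun i => (ρ i).2) ⟨b, hb⟩
      refine ⟨⟨a, haH⟩, (ih (update ρ n ⟨a, haH⟩)).2 ?_⟩
      rw [hupd ρ n ⟨a, haH⟩]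
      exact hsa

end Hull

section Main
variable {S : Signature}

theorem hull_standard [DecidableEq S.IndPred] (M : Struc S) (c0 : M.U)
    (Φ : List (ProdRule S)) (hstd : Standard M Φ) : Standard (hullStruc M c0) Φ := by
  have bridge : ∀ (k : ℕ) (v : (P : S.IndPred) × (Fin (S.arI P) → (hullStruc M c0).U)),
      v ∈ iter (hullStruc M c0) Φ k ↔
      (⟨v.1, fun i => (v.2 i).1⟩ : (P : S.IndPred) × (Fin (S.arI P) → M.U))
        ∈ iter M Φ k := by
    rintro k ⟨P, args⟩
    set ρh : ℕ → (hullStruc M c0).U :=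
      fun n => if h : n < S.arI P then args ⟨n, h⟩ else ⟨c0, c0_mem_hull M c0⟩ with hρh
    set ts : Fin (S.arI P) → Tm S := fun i => .var i.1 with hts
    have e1 : (fun i => Tm.eval (hullStruc M c0) ρh (ts i)) = args := by
      funext i
      show ρh i.1 = args i
      rw [hρh]
      simp only
      exact dif_pos i.2
    have e2 : (fun i => Tm.eval M (fun n => (ρh n).1) (ts i)) = fun i => (args i).1 := by
      funext i
      show (ρh i.1).1 = (args i).1
      rw [hρh]
      simp only
      exact congrArg Subtype.val (dif_pos i.2)
    have h1 := sat_unfold (hullStruc M c0) Φ k P ts ρh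
    rw [e1] at h1
    have h2 := sat_unfold M Φ k P ts (fun n => (ρh n).1)
    rw [e2] at h2
    rw [← h1, ← h2]
    exact sat_hull M c0 (unfold Φ k P ts) ρh
  have hM : M.interpI = ⋃ k, iter M Φ k := by rw [hstd, lfp_eq_iUnion]
  rw [Standard, lfp_eq_iUnion]
  ext v
  constructor
  · intro hv
    have hv' : (⟨v.1, fun i => (v.2 i).1⟩ : (P : S.IndPred) × (Fin (S.arI P) → M.U))
        ∈ M.interpI := hv
    rw [hM] at hv'
    obtain ⟨k, hk⟩ := Set.mem_iUnion.1 hv'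
    exact Set.mem_iUnion.2 ⟨k, (bridge k v).2 hk⟩
  · intro hv
    obtain ⟨k, hk⟩ := Set.mem_iUnion.1 hv
    show (⟨v.1, fun i => (v.2 i).1⟩ : (P : S.IndPred) × (Fin (S.arI P) → M.U)) ∈ M.interpI
    rw [hM]
    exact Set.mem_iUnion.2 ⟨k, (bridge k v).1 hk⟩

end Main

/-- every standard model for `(Σ, Φ)` (over a countable signature) is
elementarily equivalent to a countable standard model for `(Σ, Φ)`. -/
theorem stmt10 {S : Signature} [Countable S.Func] [Countable S.Pred]
    [Countable S.IndPred] (Φ : List (ProdRule S)) (M : Struc S) [Nonempty M.U]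
    (hstd : Standard M Φ) :
    ∃ M' : Struc S, Nonempty M'.U ∧ Countable M'.U ∧ Standard M' Φ ∧
      ∀ A : Fm S, A.fv = ∅ →
        ((∀ ρ : ℕ → M.U, Sat M ρ A) ↔ (∀ ρ : ℕ → M'.U, Sat M' ρ A)) := by
  classical
  obtain ⟨c0⟩ := ‹Nonempty M.U›
  refine ⟨hullStruc M c0, ⟨⟨c0, c0_mem_hull M c0⟩⟩,
    (hull_countable M c0).to_subtype, hull_standard M c0 Φ hstd, ?_⟩
  intro A hA
  constructor
  · intro h ρ
    exact (sat_hull M c0 A ρ).2 (h _)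
  · intro h ρ
    have h0 := (sat_hull M c0 A (fun _ => ⟨c0, c0_mem_hull M c0⟩)).1 (h _)
    refine (Sat_congr A (fun n hn => ?_)).1 h0
    rw [hA] at hn
    exact absurd hn (Finset.notMem_empty n)
end

section
/- For a closed formula A of Σ, the following are equivalent: (1) A holds in every standard model of (Σ, Φ); (2) A holds in every standard term model of (Σ_c, Φ), where Σ_c extends Σ by countably many fresh constants. -/
/-! ### Name constants and term models -/

/-- The signature `Σ_c` extending `Σ` by countably many fresh name constants. -/
def Signature.addConsts (S : Signature) : Signature where
  Func := S.Func ⊕ ℕ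
  arF := fun f => match f with
    | .inl f => S.arF f
    | .inr _ => 0
  Pred := S.Pred
  arP := S.arP
  IndPred := S.IndPred
  arI := S.arI

/-- Lifting of terms along `Σ ⊆ Σ_c`. -/
def Tm.lift {S : Signature} : Tm S → Tm S.addConsts
  | .var n => .var n
  | .func f ts => .func (Sum.inl f) (fun i => (ts i).lift)

/-- Lifting of formulas along `Σ ⊆ Σ_c`. -/
def Fm.lift {S : Signature} : Fm S → Fm S.addConsts
  | .fals => .fals
  | .eq t u => .eq t.lift u.lift
  | .pred Q ts => .pred Q (fun i => (ts i).lift)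
  | .ind P ts => .ind P (fun i => (ts i).lift)
  | .not A => .not A.lift
  | .and A B => .and A.lift B.lift
  | .or A B => .or A.lift B.lift
  | .imp A B => .imp A.lift B.lift
  | .all n A => .all n A.lift
  | .ex n A => .ex n A.lift

/-- Lifting of production rules along `Σ ⊆ Σ_c`. -/
def ProdRule.lift {S : Signature} (r : ProdRule S) : ProdRule S.addConsts where
  concl := r.concl
  conclArgs := fun i => (r.conclArgs i).lift
  ordPrems := r.ordPrems.map fun q => ⟨q.1, fun i => (q.2 i).lift⟩
  indPrems := r.indPrems.map fun p => ⟨p.1, fun i => (p.2 i).lift⟩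

/-- The name-extension `M_c` of a structure `M`, interpreting the `i`-th name
constant as `c i`. -/
def addConstsStruc {S : Signature} (M : Struc S) (c : ℕ → M.U) : Struc S.addConsts where
  U := M.U
  interpF := fun f => match f with
    | .inl f => M.interpF f
    | .inr n => fun _ => c n
  interpP := M.interpP
  interpI := M.interpI

/-- A structure for `Σ_c` is name-extended if every element of its universe is the
interpretation of some name constant. -/
def NameExtended {S : Signature} (M : Struc S.addConsts) : Prop :=
  ∀ u : M.U, ∃ n : ℕ, M.interpF (Sum.inr n) (fun i => i.elim0) = u

/-- Closed terms of a signature. -/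
def ClosedTm (S : Signature) : Type := {t : Tm S // t.fv = ∅}

/-- Application of a function symbol to closed terms. -/
def ClosedTm.func {S : Signature} (f : S.Func) (ts : Fin (S.arF f) → ClosedTm S) :
    ClosedTm S :=
  ⟨.func f (fun i => (ts i).1), by
    have h : ∀ i, ((ts i).1).fv = ∅ := fun i => (ts i).2
    simp only [Tm.fv, h]
    ext n
    simp⟩

/-- The data of a term model: an equivalence relation on closed terms compatible with
the function symbols, together with interpretations of the predicate symbols on
closed terms that respect the relation. -/
structure TermModelData (S : Signature) : Type where
  rel : ClosedTm S → ClosedTm S → Prop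
  equiv : Equivalence rel
  congrF : ∀ (f : S.Func) (ts us : Fin (S.arF f) → ClosedTm S),
    (∀ i, rel (ts i) (us i)) → rel (ClosedTm.func f ts) (ClosedTm.func f us)
  interpP (Q : S.Pred) : Set (Fin (S.arP Q) → ClosedTm S)
  respP : ∀ (Q : S.Pred) (ts us : Fin (S.arP Q) → ClosedTm S),
    (∀ i, rel (ts i) (us i)) → (ts ∈ interpP Q ↔ us ∈ interpP Q)
  interpI : Set ((P : S.IndPred) × (Fin (S.arI P) → ClosedTm S))
  respI : ∀ (P : S.IndPred) (ts us : Fin (S.arI P) → ClosedTm S),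
    (∀ i, rel (ts i) (us i)) → (⟨P, ts⟩ ∈ interpI ↔ ⟨P, us⟩ ∈ interpI)

def TermModelData.setoid {S : Signature} (D : TermModelData S) : Setoid (ClosedTm S) :=
  ⟨D.rel, D.equiv⟩

/-- The term model determined by term-model data: its universe is the quotient of the
set of closed terms, constants and function symbols are interpreted syntactically on
equivalence classes. -/
noncomputable def TermModelData.toStruc {S : Signature} (D : TermModelData S) : Struc S where
  U := Quotient D.setoid
  interpF f args :=
    Quotient.mk D.setoid (ClosedTm.func f (fun i => (args i).out))
  interpP Q := { v | ∃ g : Fin (S.arP Q) → ClosedTm S,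
      (∀ i, v i = Quotient.mk D.setoid (g i)) ∧ g ∈ D.interpP Q }
  interpI := { v | ∃ g : Fin (S.arI v.1) → ClosedTm S,
      (∀ i, v.2 i = Quotient.mk D.setoid (g i)) ∧ ⟨v.1, g⟩ ∈ D.interpI }

/-- The term-model data canonically associated with a structure `M`: closed terms are
identified iff they have the same value in `M`, and predicates hold of closed terms
iff they hold of their values in `M`. -/
def Struc.termData {S : Signature} (M : Struc S) : TermModelData S where
  rel t u := ∀ ρ : ℕ → M.U, t.1.eval M ρ = u.1.eval M ρ
  equiv := ⟨fun _ _ => rfl, fun h ρ => (h ρ).symm, fun h h' ρ => (h ρ).trans (h' ρ)⟩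
  congrF f ts us h := fun ρ => congrArg (M.interpF f) (funext fun i => h i ρ)
  interpP Q := { ts | ∀ ρ : ℕ → M.U, (fun i => (ts i).1.eval M ρ) ∈ M.interpP Q }
  respP Q ts us h := by
    constructor <;> intro hm ρ <;> have := hm ρ
    · rwa [show (fun i => (us i).1.eval M ρ) = fun i => (ts i).1.eval M ρ from
        funext fun i => (h i ρ).symm]
    · rwa [show (fun i => (ts i).1.eval M ρ) = fun i => (us i).1.eval M ρ from
        funext fun i => h i ρ]
  interpI := { v | ∀ ρ : ℕ → M.U, (⟨v.1, fun i => (v.2 i).1.eval M ρ⟩ :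
      (P : S.IndPred) × (Fin (S.arI P) → M.U)) ∈ M.interpI }
  respI P ts us h := by
    constructor <;> intro hm ρ <;> have := hm ρ
    · rwa [show (fun i => (us i).1.eval M ρ) = fun i => (ts i).1.eval M ρ from
        funext fun i => (h i ρ).symm]
    · rwa [show (fun i => (ts i).1.eval M ρ) = fun i => (us i).1.eval M ρ from
        funext fun i => h i ρ]

/-- The term model `M_T` of a structure `M`. -/
noncomputable def termModel {S : Signature} (M : Struc S) : Struc S :=
  (Struc.termData M).toStruc


/-! ### Auxiliary lemmas -/

section Aux

variable {S : Signature}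

theorem Tm.eval_agree (M : Struc S) {ρ ρ' : ℕ → M.U} :
    ∀ t : Tm S, (∀ n ∈ t.fv, ρ n = ρ' n) → t.eval M ρ = t.eval M ρ'
  | .var n, h => h n (by simp [Tm.fv])
  | .func f ts, h => by
    simp only [Tm.eval]
    congr 1
    funext i
    exact Tm.eval_agree M (ts i) fun n hn =>
      h n (by simp only [Tm.fv, Finset.mem_biUnion]; exact ⟨i, Finset.mem_univ i, hn⟩)

theorem Tm.eval_closed (M : Struc S) (ρ ρ' : ℕ → M.U) (t : Tm S) (ht : t.fv = ∅) :
    t.eval M ρ = t.eval M ρ' :=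
  Tm.eval_agree M t (by simp [ht])

theorem Sat_agree (M : Struc S) :
    ∀ (B : Fm S) {ρ ρ' : ℕ → M.U}, (∀ n ∈ B.fv, ρ n = ρ' n) → (Sat M ρ B ↔ Sat M ρ' B) := by
  intro B
  induction B with
  | fals => intro ρ ρ' h; exact Iff.rfl
  | eq t u =>
    intro ρ ρ' h
    simp only [Sat]
    rw [Tm.eval_agree M t fun n hn => h n (by simp [Fm.fv, hn]),
      Tm.eval_agree M u fun n hn => h n (by simp [Fm.fv, hn])]
  | pred Q ts =>
    intro ρ ρ' h
    simp only [Sat]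
    have : (fun i => (ts i).eval M ρ) = fun i => (ts i).eval M ρ' := by
      funext i
      exact Tm.eval_agree M (ts i) fun n hn =>
        h n (by simp only [Fm.fv, Finset.mem_biUnion]; exact ⟨i, Finset.mem_univ i, hn⟩)
    rw [this]
  | ind P ts =>
    intro ρ ρ' h
    simp only [Sat]
    have : (fun i => (ts i).eval M ρ) = fun i => (ts i).eval M ρ' := by
      funext i
      exact Tm.eval_agree M (ts i) fun n hn =>
        h n (by simp only [Fm.fv, Finset.mem_biUnion]; exact ⟨i, Finset.mem_univ i, hn⟩)
    rw [this]
  | not A ih =>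
    intro ρ ρ' h
    simp only [Sat]
    rw [ih h]
  | and A B ihA ihB =>
    intro ρ ρ' h
    simp only [Sat]
    rw [ihA fun n hn => h n (by simp [Fm.fv, hn]), ihB fun n hn => h n (by simp [Fm.fv, hn])]
  | or A B ihA ihB =>
    intro ρ ρ' h
    simp only [Sat]
    rw [ihA fun n hn => h n (by simp [Fm.fv, hn]), ihB fun n hn => h n (by simp [Fm.fv, hn])]
  | imp A B ihA ihB =>
    intro ρ ρ' h
    simp only [Sat]
    rw [ihA fun n hn => h n (by simp [Fm.fv, hn]), ihB fun n hn => h n (by simp [Fm.fv, hn])]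
  | all n A ih =>
    intro ρ ρ' h
    simp only [Sat]
    refine forall_congr' fun a => ih fun m hm => ?_
    by_cases hmn : m = n
    · simp [update, hmn]
    · simp only [update, if_neg hmn]
      exact h m (by simp [Fm.fv, Finset.mem_erase, hmn, hm])
  | ex n A ih =>
    intro ρ ρ' h
    simp only [Sat]
    refine exists_congr fun a => ih fun m hm => ?_
    by_cases hmn : m = n
    · simp [update, hmn]
    · simp only [update, if_neg hmn]
      exact h m (by simp [Fm.fv, Finset.mem_erase, hmn, hm])

end Aux

section Lift

variable {S : Signature}

/-- The reduct of a `Σ_c`-structure to `Σ`. -/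
def Struc.reduct (M : Struc S.addConsts) : Struc S where
  U := M.U
  interpF f := M.interpF (Sum.inl f)
  interpP := M.interpP
  interpI := M.interpI

theorem Tm.eval_lift (M : Struc S.addConsts) (ρ : ℕ → M.U) :
    ∀ t : Tm S, (t.lift).eval M ρ = t.eval M.reduct ρ
  | .var n => rfl
  | .func f ts => by
    simp only [Tm.lift, Tm.eval]
    exact congrArg _ (funext fun i => Tm.eval_lift M ρ (ts i))

theorem Sat_lift (M : Struc S.addConsts) :
    ∀ (B : Fm S) (ρ : ℕ → M.U), (Sat M ρ B.lift ↔ Sat M.reduct ρ B) := by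
  intro B
  induction B with
  | fals => intro ρ; exact Iff.rfl
  | eq t u => intro ρ; simp only [Fm.lift, Sat, Tm.eval_lift]; exact Iff.rfl
  | pred Q ts => intro ρ; simp only [Fm.lift, Sat, Tm.eval_lift]; exact Iff.rfl
  | ind P ts => intro ρ; simp only [Fm.lift, Sat, Tm.eval_lift]; exact Iff.rfl
  | not A ih => intro ρ; simp only [Fm.lift, Sat, ih]
  | and A B ihA ihB => intro ρ; simp only [Fm.lift, Sat, ihA, ihB]
  | or A B ihA ihB => intro ρ; simp only [Fm.lift, Sat, ihA, ihB]
  | imp A B ihA ihB => intro ρ; simp only [Fm.lift, Sat, ihA, ihB]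
  | all n A ih => intro ρ; simp only [Fm.lift, Sat, ih]; exact Iff.rfl
  | ex n A ih => intro ρ; simp only [Fm.lift, Sat, ih]; exact Iff.rfl

theorem step_lift (M : Struc S.addConsts) (Φ : List (ProdRule S)) (X) :
    step M (Φ.map ProdRule.lift) X = step M.reduct Φ X := by
  ext v
  constructor
  · rintro ⟨r', hr', ρ, hq, hp, hv⟩
    obtain ⟨r, hrΦ, rfl⟩ := List.mem_map.1 hr'
    refine ⟨r, hrΦ, ρ, ?_, ?_, ?_⟩
    · intro q hq'
      have := hq ⟨q.1, fun i => (q.2 i).lift⟩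
        (List.mem_map.2 ⟨q, hq', rfl⟩)
      simp only [Tm.eval_lift] at this; exact this
    · intro p hp'
      have := hp ⟨p.1, fun i => (p.2 i).lift⟩
        (List.mem_map.2 ⟨p, hp', rfl⟩)
      simp only [Tm.eval_lift] at this; exact this
    · rw [hv]
      simp only [ProdRule.lift, Tm.eval_lift]
      rfl
  · rintro ⟨r, hrΦ, ρ, hq, hp, hv⟩
    refine ⟨r.lift, List.mem_map.2 ⟨r, hrΦ, rfl⟩, ρ, ?_, ?_, ?_⟩
    · intro q hq'
      obtain ⟨q₀, hq₀, rfl⟩ := List.mem_map.1 hq'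
      have := hq q₀ hq₀
      simp only [Tm.eval_lift M ρ]; exact this
    · intro p hp'
      obtain ⟨p₀, hp₀, rfl⟩ := List.mem_map.1 hp'
      have := hp p₀ hp₀
      simp only [Tm.eval_lift M ρ]; exact this
    · rw [hv]
      simp only [ProdRule.lift, Tm.eval_lift]
      exact congrArg (Sigma.mk r.concl) (funext fun i => (Tm.eval_lift M ρ (r.conclArgs i)).symm)

theorem stepHom_lift (M : Struc S.addConsts) (Φ : List (ProdRule S)) :
    stepHom M (Φ.map ProdRule.lift) = stepHom M.reduct Φ := by
  apply OrderHom.ext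
  funext X
  exact step_lift M Φ X

theorem Standard_lift (M : Struc S.addConsts) (Φ : List (ProdRule S)) :
    Standard M (Φ.map ProdRule.lift) ↔ Standard M.reduct Φ := by
  unfold Standard
  rw [stepHom_lift]
  exact Iff.rfl

end Lift

section Continuity

variable {S : Signature}

theorem list_bound_s12 {α : Type*} (P : α → ℕ → Prop)
    (Pmono : ∀ a m n, m ≤ n → P a m → P a n) :
    ∀ l : List α, (∀ a ∈ l, ∃ n, P a n) → ∃ N, ∀ a ∈ l, P a N := by
  intro l
  induction l with
  | nil => intro _; exact ⟨0, by simp⟩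
  | cons a l ih =>
    intro h
    obtain ⟨n₁, hn₁⟩ := h a List.mem_cons_self
    obtain ⟨N, hN⟩ := ih fun b hb => h b (List.mem_cons_of_mem a hb)
    refine ⟨max n₁ N, ?_⟩
    intro b hb
    rcases List.mem_cons.1 hb with rfl | hb'
    · exact Pmono b n₁ _ (le_max_left _ _) hn₁
    · exact Pmono b N _ (le_max_right _ _) (hN b hb')

theorem iter_mono (M : Struc S) (Φ : List (ProdRule S)) :
    Monotone fun n => (step M Φ)^[n] (∅ : Set ((P : S.IndPred) × (Fin (S.arI P) → M.U))) := by
  apply monotone_nat_of_le_succ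
  intro n
  induction n with
  | zero => simp
  | succ n ih =>
    rw [Function.iterate_succ_apply', Function.iterate_succ_apply']
    exact step_mono M Φ ih

theorem lfp_eq_iUnion_s12 (M : Struc S) (Φ : List (ProdRule S)) :
    OrderHom.lfp (stepHom M Φ) = ⋃ n, (step M Φ)^[n] ∅ := by
  apply le_antisymm
  · apply OrderHom.lfp_le
    rintro v ⟨r, hr, ρ, hq, hp, hv⟩
    have hb : ∃ N, ∀ p ∈ r.indPrems,
        (⟨p.1, fun i => (p.2 i).eval M ρ⟩ : (P : S.IndPred) × (Fin (S.arI P) → M.U)) ∈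
          (step M Φ)^[N] ∅ := by
      apply list_bound_s12
      · intro p m n hmn hm
        exact iter_mono M Φ hmn hm
      · intro p hp'
        exact Set.mem_iUnion.1 (hp p hp')
    obtain ⟨N, hN⟩ := hb
    apply Set.mem_iUnion.2 ⟨N + 1, ?_⟩
    rw [Function.iterate_succ_apply']
    exact ⟨r, hr, ρ, hq, hN, hv⟩
  · apply Set.iUnion_subset
    intro n
    induction n with
    | zero => simp
    | succ n ih =>
      rw [Function.iterate_succ_apply']
      calc step M Φ ((step M Φ)^[n] ∅) ⊆ step M Φ (OrderHom.lfp (stepHom M Φ)) :=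
            step_mono M Φ ih
        _ = OrderHom.lfp (stepHom M Φ) := OrderHom.map_lfp (stepHom M Φ)

end Continuity

/-! ### Countable Skolem hulls -/

section Hull

variable {S : Signature}

/-- The quantified subformulas of a formula, with their bound variable. -/
def quantPairs : Fm S → List (ℕ × Fm S)
  | .not A => quantPairs A
  | .and A B => quantPairs A ++ quantPairs B
  | .or A B => quantPairs A ++ quantPairs B
  | .imp A B => quantPairs A ++ quantPairs B
  | .all n A => (n, A) :: quantPairs A
  | .ex n A => (n, A) :: quantPairs A
  | _ => []

/-- `H` is closed under the functions of `M`. -/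
def FnClosed (M : Struc S) (H : Set M.U) : Prop :=
  ∀ (f : S.Func) (v : Fin (S.arF f) → M.U), (∀ i, v i ∈ H) → M.interpF f v ∈ H

/-- `H` contains quantifier witnesses for `C` (with bound variable `n`) over
parameters from `H`. -/
def QW (M : Struc S) (H : Set M.U) (n : ℕ) (C : Fm S) : Prop :=
  ∀ ρ : ℕ → M.U, (∀ m, ρ m ∈ H) →
    ((∃ b, Sat M (update ρ n b) C) → ∃ b ∈ H, Sat M (update ρ n b) C) ∧
    ((∃ b, ¬ Sat M (update ρ n b) C) → ∃ b ∈ H, ¬ Sat M (update ρ n b) C)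

/-- `H` contains witnessing assignments for production-rule instances whose
conclusion arguments evaluate into `H`. -/
def RW (M : Struc S) (Φ : List (ProdRule S)) (H : Set M.U) (r : ProdRule S) : Prop :=
  ∀ (n : ℕ) (ρ : ℕ → M.U),
    (∀ i, (r.conclArgs i).eval M ρ ∈ H) →
    (∀ q ∈ r.ordPrems, (fun i => (q.2 i).eval M ρ) ∈ M.interpP q.1) →
    (∀ p ∈ r.indPrems, (⟨p.1, fun i => (p.2 i).eval M ρ⟩ :
        (P : S.IndPred) × (Fin (S.arI P) → M.U)) ∈ (step M Φ)^[n] ∅) →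
    ∃ ρ₂ : ℕ → M.U, (∀ m, ρ₂ m ∈ H) ∧
      (∀ i, (r.conclArgs i).eval M ρ₂ = (r.conclArgs i).eval M ρ) ∧
      (∀ q ∈ r.ordPrems, (fun i => (q.2 i).eval M ρ₂) ∈ M.interpP q.1) ∧
      (∀ p ∈ r.indPrems, (⟨p.1, fun i => (p.2 i).eval M ρ₂⟩ :
        (P : S.IndPred) × (Fin (S.arI P) → M.U)) ∈ (step M Φ)^[n] ∅)

/-- Index type for one round of hull closure. -/
def HullIdx (S : Signature) : Type :=
  ℕ ⊕ ((Σ f : S.Func, (Fin (S.arF f) → ℕ)) ⊕ ((Bool × ℕ × List ℕ) ⊕ (ℕ × ℕ × List ℕ × ℕ)))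

instance [Countable S.Func] : Countable (HullIdx S) := by
  unfold HullIdx; infer_instance

instance : Nonempty (HullIdx S) := ⟨Sum.inl 0⟩

/-- The condition witnessed in the rule component of the hull construction. -/
def RuleCond (M : Struc S) (Φ : List (ProdRule S)) (r : ProdRule S) (n : ℕ)
    (t : Fin (S.arI r.concl) → M.U) : Prop :=
  ∃ ρc : ℕ → M.U,
    (∀ i, (r.conclArgs i).eval M ρc = t i) ∧
    (∀ q ∈ r.ordPrems, (fun i => (q.2 i).eval M ρc) ∈ M.interpP q.1) ∧
    (∀ p ∈ r.indPrems, (⟨p.1, fun i => (p.2 i).eval M ρc⟩ :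
        (P : S.IndPred) × (Fin (S.arI P) → M.U)) ∈ (step M Φ)^[n] ∅)

open Classical in
/-- One round of hull closure. -/
noncomputable def hullF (M : Struc S) (Φ : List (ProdRule S)) (A : Fm S)
    (e : ℕ → M.U) : HullIdx S → M.U
  | .inl m => e m
  | .inr (.inl ⟨f, codes⟩) => M.interpF f (fun i => e (codes i))
  | .inr (.inr (.inl (b, j, l))) =>
    match (quantPairs A)[j]? with
    | none => e 0
    | some p =>
      let ρ : ℕ → M.U := fun m => e (l.getD m 0)
      if b then
        (if h : ∃ x, Sat M (update ρ p.1 x) p.2 then h.choose else e 0)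
      else
        (if h : ∃ x, ¬ Sat M (update ρ p.1 x) p.2 then h.choose else e 0)
  | .inr (.inr (.inr (j, n, l, m))) =>
    match Φ[j]? with
    | none => e 0
    | some r =>
      if h : RuleCond M Φ r n (fun i => e (l.getD i.1 0)) then h.choose m else e 0

/-- The iterated hull construction. -/
noncomputable def hullE (M : Struc S) (Φ : List (ProdRule S)) (A : Fm S)
    (u : ℕ → HullIdx S) (ρ₀ : ℕ → M.U) : ℕ → ℕ → M.U
  | 0 => ρ₀
  | k + 1 => fun m => hullF M Φ A (hullE M Φ A u ρ₀ k) (u m)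

end Hull

section HullProps

variable {S : Signature} (M : Struc S) (Φ : List (ProdRule S)) (A : Fm S)
  (u : ℕ → HullIdx S) (hu : Function.Surjective u) (ρ₀ : ℕ → M.U)
/-- The hull. -/
def hullSet : Set M.U := ⋃ k, Set.range (hullE M Φ A u ρ₀ k)

include hu
set_option linter.unusedSectionVars false

theorem hullF_mem_succ (K : ℕ) (idx : HullIdx S) :
    hullF M Φ A (hullE M Φ A u ρ₀ K) idx ∈ Set.range (hullE M Φ A u ρ₀ (K + 1)) := by
  obtain ⟨m, rfl⟩ := hu idx
  exact ⟨m, rfl⟩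

theorem hullE_mono : Monotone fun k => Set.range (hullE M Φ A u ρ₀ k) := by
  apply monotone_nat_of_le_succ
  intro k x hx
  obtain ⟨m, rfl⟩ := hx
  exact hullF_mem_succ M Φ A u hu ρ₀ k (Sum.inl m)

theorem range_mem_hull (K : ℕ) : Set.range (hullE M Φ A u ρ₀ K) ⊆ hullSet M Φ A u ρ₀ :=
  Set.subset_iUnion (fun k => Set.range (hullE M Φ A u ρ₀ k)) K

theorem tuple_codes {t : ℕ} (v : Fin t → M.U) (hv : ∀ i, v i ∈ hullSet M Φ A u ρ₀) :
    ∃ (K : ℕ) (codes : Fin t → ℕ), ∀ i, v i = hullE M Φ A u ρ₀ K (codes i) := by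
  have h1 : ∀ i, ∃ k, v i ∈ Set.range (hullE M Φ A u ρ₀ k) :=
    fun i => Set.mem_iUnion.1 (hv i)
  choose k hk using h1
  set K := Finset.univ.sup k with hK
  have h2 : ∀ i, v i ∈ Set.range (hullE M Φ A u ρ₀ K) := fun i =>
    hullE_mono M Φ A u hu ρ₀ (Finset.le_sup (Finset.mem_univ i)) (hk i)
  choose codes hcodes using h2
  exact ⟨K, codes, fun i => (hcodes i).symm⟩

theorem finset_codes (s : Finset ℕ) (ρ : ℕ → M.U) (h : ∀ m ∈ s, ρ m ∈ hullSet M Φ A u ρ₀) :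
    ∃ K : ℕ, ∀ m ∈ s, ρ m ∈ Set.range (hullE M Φ A u ρ₀ K) := by
  induction s using Finset.induction_on with
  | empty => exact ⟨0, by simp⟩
  | insert a s ha ih =>
    obtain ⟨k₁, hk₁⟩ := Set.mem_iUnion.1 (h a (Finset.mem_insert_self a s))
    obtain ⟨K, hK⟩ := ih fun m hm => h m (Finset.mem_insert_of_mem hm)
    refine ⟨max k₁ K, fun m hm => ?_⟩
    rcases Finset.mem_insert.1 hm with rfl | hm'
    · exact hullE_mono M Φ A u hu ρ₀ (le_max_left _ _) hk₁
    · exact hullE_mono M Φ A u hu ρ₀ (le_max_right _ _) (hK m hm')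

theorem hull_fnClosed : FnClosed M (hullSet M Φ A u ρ₀) := by
  intro f v hv
  obtain ⟨K, codes, hcodes⟩ := tuple_codes M Φ A u hu ρ₀ v hv
  have : M.interpF f v = hullF M Φ A (hullE M Φ A u ρ₀ K) (Sum.inr (Sum.inl ⟨f, codes⟩)) := by
    simp only [hullF]
    congr 1
    funext i
    exact hcodes i
  rw [this]
  exact range_mem_hull M Φ A u hu ρ₀ (K + 1) (hullF_mem_succ M Φ A u hu ρ₀ K _)

theorem hull_mem_ρ₀ (m : ℕ) : ρ₀ m ∈ hullSet M Φ A u ρ₀ :=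
  range_mem_hull M Φ A u hu ρ₀ 0 ⟨m, rfl⟩

theorem hull_countable_s12 : (hullSet M Φ A u ρ₀).Countable :=
  Set.countable_iUnion fun _ => Set.countable_range _

theorem hull_nonempty : (hullSet M Φ A u ρ₀).Nonempty :=
  ⟨ρ₀ 0, hull_mem_ρ₀ M Φ A u hu ρ₀ 0⟩

end HullProps

section HullProps2

variable {S : Signature} (M : Struc S) (Φ : List (ProdRule S)) (A : Fm S)
  (u : ℕ → HullIdx S) (hu : Function.Surjective u) (ρ₀ : ℕ → M.U)

include hu
set_option linter.unusedSectionVars false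

theorem hull_QW (p : ℕ × Fm S) (hp : p ∈ quantPairs A) :
    QW M (hullSet M Φ A u ρ₀) p.1 p.2 := by
  classical
  obtain ⟨j, hj⟩ := List.mem_iff_getElem?.1 hp
  obtain ⟨n, C⟩ := p
  intro ρ hρ
  obtain ⟨K, hK⟩ := finset_codes M Φ A u hu ρ₀ C.fv ρ (fun m _ => hρ m)
  set E := hullE M Φ A u ρ₀ with hE
  set g : ℕ → ℕ := fun m => if h : ∃ j', E K j' = ρ m then h.choose else 0 with hg
  set N := C.fv.sup id with hN
  set l : List ℕ := (List.range (N + 1)).map g with hl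
  have hagree : ∀ m ∈ C.fv, E K (l.getD m 0) = ρ m := by
    intro m hm
    have hmN : m < N + 1 := Nat.lt_succ_of_le (Finset.le_sup (f := id) hm)
    have hld : l.getD m 0 = g m := by
      rw [hl, List.getD_eq_getElem?_getD, List.getElem?_map, List.getElem?_range hmN]
      rfl
    have hex : ∃ j', E K j' = ρ m := hK m hm
    rw [hld, hg]
    simp only [dif_pos hex]
    exact hex.choose_spec
  have satIff : ∀ b, (Sat M (update ρ n b) C ↔
      Sat M (update (fun m => E K (l.getD m 0)) n b) C) := by
    intro b
    apply Sat_agree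
    intro m hm
    by_cases hmn : m = n
    · simp [update, hmn]
    · simp only [update, if_neg hmn]
      exact (hagree m hm).symm
  constructor
  · rintro ⟨b, hb⟩
    have hex : ∃ x, Sat M (update (fun m => E K (l.getD m 0)) n x) C := ⟨b, (satIff b).1 hb⟩
    refine ⟨hullF M Φ A (E K) (Sum.inr (Sum.inr (Sum.inl (true, j, l)))), ?_, ?_⟩
    · exact range_mem_hull M Φ A u hu ρ₀ (K + 1) (hullF_mem_succ M Φ A u hu ρ₀ K _)
    · apply (satIff _).2
      have hv : hullF M Φ A (E K) (Sum.inr (Sum.inr (Sum.inl (true, j, l)))) = hex.choose := by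
        simp only [hullF, hj, if_true, dif_pos hex]
      rw [hv]
      exact hex.choose_spec
  · rintro ⟨b, hb⟩
    have hex : ∃ x, ¬ Sat M (update (fun m => E K (l.getD m 0)) n x) C :=
      ⟨b, fun hc => hb ((satIff b).2 hc)⟩
    refine ⟨hullF M Φ A (E K) (Sum.inr (Sum.inr (Sum.inl (false, j, l)))), ?_, ?_⟩
    · exact range_mem_hull M Φ A u hu ρ₀ (K + 1) (hullF_mem_succ M Φ A u hu ρ₀ K _)
    · intro hc
      have hv : hullF M Φ A (E K) (Sum.inr (Sum.inr (Sum.inl (false, j, l)))) = hex.choose := by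
        simp only [hullF, hj, Bool.false_eq_true, if_false, dif_pos hex]
      rw [hv] at hc
      exact hex.choose_spec ((satIff _).1 hc)

theorem hull_RW (r : ProdRule S) (hr : r ∈ Φ) : RW M Φ (hullSet M Φ A u ρ₀) r := by
  classical
  obtain ⟨j, hj⟩ := List.mem_iff_getElem?.1 hr
  intro n ρ hconcl hord hind
  obtain ⟨K, codes, hcodes⟩ :=
    tuple_codes M Φ A u hu ρ₀ (fun i => (r.conclArgs i).eval M ρ) hconcl
  set E := hullE M Φ A u ρ₀ with hE
  set l : List ℕ := List.ofFn codes with hl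
  have hld : ∀ i : Fin (S.arI r.concl), l.getD i.1 0 = codes i := by
    intro i
    rw [hl, List.getD_eq_getElem?_getD]
    simp [List.getElem?_ofFn]
  have hcond : RuleCond M Φ r n (fun i => E K (l.getD i.1 0)) := by
    refine ⟨ρ, ?_, hord, hind⟩
    intro i
    show Tm.eval M ρ (r.conclArgs i) = E K (l.getD i.1 0)
    rw [hld i, ← hcodes i]
  have hval : ∀ m, hullF M Φ A (E K) (Sum.inr (Sum.inr (Sum.inr (j, n, l, m)))) =
      hcond.choose m := by
    intro m
    simp only [hullF, hj, dif_pos hcond]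
  obtain ⟨hc1, hc2, hc3⟩ := hcond.choose_spec
  refine ⟨hcond.choose, ?_, ?_, hc2, hc3⟩
  · intro m
    rw [← hval m]
    exact range_mem_hull M Φ A u hu ρ₀ (K + 1) (hullF_mem_succ M Φ A u hu ρ₀ K _)
  · intro i
    have hc1' : Tm.eval M (Exists.choose hcond) (r.conclArgs i) = E K (l.getD i.1 0) := hc1 i
    rw [hc1', hld i, ← hcodes i]

end HullProps2

theorem exists_hull {S : Signature} [Countable S.Func] (M : Struc S)
    (Φ : List (ProdRule S)) (A : Fm S) (ρ₀ : ℕ → M.U) :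
    ∃ c : ℕ → M.U, (∀ m, ρ₀ m ∈ Set.range c) ∧ FnClosed M (Set.range c) ∧
      (∀ p ∈ quantPairs A, QW M (Set.range c) p.1 p.2) ∧
      (∀ r ∈ Φ, RW M Φ (Set.range c) r) := by
  obtain ⟨u, hu⟩ := exists_surjective_nat (HullIdx S)
  obtain ⟨c, hc⟩ := (hull_countable_s12 M Φ A u hu ρ₀).exists_eq_range
    (hull_nonempty M Φ A u hu ρ₀)
  refine ⟨c, ?_, ?_, ?_, ?_⟩
  · intro m; rw [← hc]; exact hull_mem_ρ₀ M Φ A u hu ρ₀ m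
  · rw [← hc]; exact hull_fnClosed M Φ A u hu ρ₀
  · intro p hp; rw [← hc]; exact hull_QW M Φ A u hu ρ₀ p hp
  · intro r hr; rw [← hc]; exact hull_RW M Φ A u hu ρ₀ r hr

/-! ### Transfer between a structure and its term model on a hull -/

section TermTransfer

variable {S : Signature} (M : Struc S) (c : ℕ → M.U)

/-- Evaluation map from the term model of `M_c` into `M`. -/
noncomputable def evT :
    (TermModelData.toStruc (Struc.termData (addConstsStruc M c))).U → M.U :=
  Quotient.lift
    (fun t : ClosedTm S.addConsts => t.1.eval (addConstsStruc M c) (fun _ => c 0))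
    (fun _ _ hab => hab (fun _ => c 0))

theorem evT_mk (t : ClosedTm S.addConsts) (ρ : ℕ → M.U) :
    evT M c (Quotient.mk (Struc.termData (addConstsStruc M c)).setoid t) =
      t.1.eval (addConstsStruc M c) ρ :=
  Tm.eval_closed (addConstsStruc M c) _ ρ t.1 t.2

theorem evT_inj : Function.Injective (evT M c) := by
  intro a b
  induction a using Quotient.ind
  induction b using Quotient.ind
  rename_i ta tb
  intro h
  apply Quotient.sound
  intro ρ
  calc ta.1.eval (addConstsStruc M c) ρ
      = ta.1.eval (addConstsStruc M c) (fun _ => c 0) := Tm.eval_closed _ _ _ _ ta.2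
    _ = tb.1.eval (addConstsStruc M c) (fun _ => c 0) := h
    _ = tb.1.eval (addConstsStruc M c) ρ := Tm.eval_closed _ _ _ _ tb.2

theorem closed_eval_mem (hF : FnClosed M (Set.range c)) :
    ∀ (t : Tm S.addConsts) (ρ : ℕ → M.U), (∀ m, ρ m ∈ Set.range c) →
      t.eval (addConstsStruc M c) ρ ∈ Set.range c
  | .var n, _, hρ => hρ n
  | .func (Sum.inl f) ts, ρ, hρ =>
      hF f _ (fun i => closed_eval_mem hF (ts i) ρ hρ)
  | .func (Sum.inr n) _, _, _ => ⟨n, rfl⟩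

theorem evT_mem (hF : FnClosed M (Set.range c)) (a) : evT M c a ∈ Set.range c := by
  induction a using Quotient.ind
  rename_i t
  exact closed_eval_mem M c hF t.1 _ (fun _ => ⟨0, rfl⟩)

theorem evT_surj (x : M.U) (hx : x ∈ Set.range c) : ∃ a, evT M c a = x := by
  obtain ⟨n, rfl⟩ := hx
  refine ⟨Quotient.mk _ ⟨.func (Sum.inr n) (fun i => i.elim0), ?_⟩, rfl⟩
  simp only [Tm.fv]
  ext m
  simp only [Finset.mem_biUnion, Finset.mem_univ, Finset.notMem_empty, iff_false, not_exists]
  exact fun x _ => x.elim0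

theorem evT_eval :
    ∀ (t : Tm S.addConsts)
      (ρ' : ℕ → (TermModelData.toStruc (Struc.termData (addConstsStruc M c))).U),
      evT M c (t.eval (TermModelData.toStruc (Struc.termData (addConstsStruc M c))) ρ') =
        t.eval (addConstsStruc M c) (fun m => evT M c (ρ' m))
  | .var n, _ => rfl
  | .func f ts, ρ' => by
    simp only [Tm.eval]
    show evT M c (Quotient.mk _ (ClosedTm.func f _)) = _
    rw [evT_mk M c _ (fun _ => c 0)]
    show (addConstsStruc M c).interpF f
        (fun i => ((((ts i).eval _ ρ').out).1).eval (addConstsStruc M c) (fun _ => c 0)) = _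
    congr 1
    funext i
    have h1 : ((((ts i).eval (TermModelData.toStruc (Struc.termData (addConstsStruc M c)))
        ρ').out).1).eval (addConstsStruc M c) (fun _ => c 0) =
        evT M c ((ts i).eval (TermModelData.toStruc (Struc.termData (addConstsStruc M c))) ρ') := by
      conv_rhs => rw [← Quotient.out_eq ((ts i).eval _ ρ')]
      rfl
    rw [h1, evT_eval (ts i) ρ']

theorem interpP_iff (Q : S.Pred)
    (v : Fin (S.arP Q) → (TermModelData.toStruc (Struc.termData (addConstsStruc M c))).U) :
    v ∈ (TermModelData.toStruc (Struc.termData (addConstsStruc M c))).interpP Q ↔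
      (fun i => evT M c (v i)) ∈ M.interpP Q := by
  constructor
  · rintro ⟨g, hg, hgP⟩
    have : (fun i => evT M c (v i)) =
        fun i => (g i).1.eval (addConstsStruc M c) (fun _ => c 0) := by
      funext i
      rw [hg i]
      exact evT_mk M c (g i) (fun _ => c 0)
    rw [this]
    exact hgP (fun _ => c 0)
  · intro h
    refine ⟨fun i => (v i).out, fun i => (Quotient.out_eq (v i)).symm, ?_⟩
    intro ρ
    have : (fun i => ((v i).out).1.eval (addConstsStruc M c) ρ) =
        fun i => evT M c (v i) := by
      funext i
      conv_rhs => rw [← Quotient.out_eq (v i)]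
      exact (evT_mk M c ((v i).out) ρ).symm
    show (fun i => ((v i).out).1.eval (addConstsStruc M c) ρ) ∈ (addConstsStruc M c).interpP Q
    rw [this]
    exact h

theorem interpI_iff (P : S.IndPred)
    (v : Fin (S.arI P) → (TermModelData.toStruc (Struc.termData (addConstsStruc M c))).U) :
    (⟨P, v⟩ : (P : S.addConsts.IndPred) × (Fin (S.addConsts.arI P) → _)) ∈
        (TermModelData.toStruc (Struc.termData (addConstsStruc M c))).interpI ↔
      (⟨P, fun i => evT M c (v i)⟩ : (P : S.IndPred) × (Fin (S.arI P) → M.U)) ∈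
        M.interpI := by
  constructor
  · rintro ⟨g, hg, hgP⟩
    have : (fun i => evT M c (v i)) =
        fun i => (g i).1.eval (addConstsStruc M c) (fun _ => c 0) := by
      funext i
      have hg' : v i = Quotient.mk (Struc.termData (addConstsStruc M c)).setoid (g i) := hg i
      rw [hg']
      exact evT_mk M c (g i) (fun _ => c 0)
    rw [this]
    exact hgP (fun _ => c 0)
  · intro h
    refine ⟨fun i => (v i).out, fun i => (Quotient.out_eq (v i)).symm, ?_⟩
    intro ρ
    have : (fun i => ((v i).out).1.eval (addConstsStruc M c) ρ) =
        fun i => evT M c (v i) := by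
      funext i
      conv_rhs => rw [← Quotient.out_eq (v i)]
      exact (evT_mk M c ((v i).out) ρ).symm
    show (⟨P, fun i => ((v i).out).1.eval (addConstsStruc M c) ρ⟩ :
        (P : S.IndPred) × (Fin (S.arI P) → M.U)) ∈ M.interpI
    rw [this]
    exact h

end TermTransfer

section MainTransfer

variable {S : Signature} (M : Struc S) (c : ℕ → M.U)

/-- The term model of `M_c`, abbreviated. -/
noncomputable def tmStruc : Struc S.addConsts :=
  TermModelData.toStruc (Struc.termData (addConstsStruc M c))

theorem reduct_addConsts : (addConstsStruc M c).reduct = M := rfl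

theorem evT_evalL (t : Tm S) (ρ' : ℕ → (tmStruc M c).U) :
    evT M c ((t.lift).eval (tmStruc M c) ρ') = t.eval M (fun m => evT M c (ρ' m)) := by
  rw [show (t.lift).eval (tmStruc M c) ρ' =
    (t.lift).eval (TermModelData.toStruc (Struc.termData (addConstsStruc M c))) ρ' from rfl]
  rw [evT_eval M c (t.lift) ρ']
  exact Tm.eval_lift (addConstsStruc M c) _ t

theorem evT_update (ρ' : ℕ → (tmStruc M c).U) (n : ℕ) (a : (tmStruc M c).U) :
    (fun m => evT M c (update ρ' n a m)) =
      update (fun m => evT M c (ρ' m)) n (evT M c a) := by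
  funext m
  by_cases hm : m = n <;> simp [update, hm]

theorem stage_iff (Φ : List (ProdRule S)) (hF : FnClosed M (Set.range c))
    (hR : ∀ r ∈ Φ, RW M Φ (Set.range c) r) :
    ∀ (n : ℕ) (P : S.IndPred) (v : Fin (S.arI P) → (tmStruc M c).U),
      ((⟨P, v⟩ : (P : S.addConsts.IndPred) ×
            (Fin (S.addConsts.arI P) → (tmStruc M c).U)) ∈
          (step (tmStruc M c) (Φ.map ProdRule.lift))^[n] ∅) ↔
        ((⟨P, fun i => evT M c (v i)⟩ : (P : S.IndPred) × (Fin (S.arI P) → M.U)) ∈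
          (step M Φ)^[n] ∅) := by
  intro n
  induction n with
  | zero => intro P v; simp
  | succ n ih =>
    intro P v
    rw [Function.iterate_succ_apply', Function.iterate_succ_apply']
    constructor
    · rintro ⟨r', hr', ρ', hq, hp, hv⟩
      obtain ⟨r, hrΦ, rfl⟩ := List.mem_map.1 hr'
      replace hv := Sigma.mk.inj hv
      obtain ⟨hP, hvv⟩ := hv
      subst hP
      have hv2 := eq_of_heq hvv
      refine ⟨r, hrΦ, fun m => evT M c (ρ' m), ?_, ?_, ?_⟩
      · intro q hq'
        have h1 := hq ⟨q.1, fun i => (q.2 i).lift⟩ (List.mem_map.2 ⟨q, hq', rfl⟩)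
        have h2 : (fun i => evT M c (((q.2 i).lift).eval (tmStruc M c) ρ')) ∈
            M.interpP q.1 := (interpP_iff M c q.1 _).1 h1
        rw [show (fun i => evT M c (((q.2 i).lift).eval (tmStruc M c) ρ')) =
          fun i => (q.2 i).eval M (fun m => evT M c (ρ' m)) from
          funext fun i => evT_evalL M c _ _] at h2
        exact h2
      · intro p hp'
        have h1 := hp ⟨p.1, fun i => (p.2 i).lift⟩ (List.mem_map.2 ⟨p, hp', rfl⟩)
        have h2 := (ih p.1 (fun i => ((p.2 i).lift).eval (tmStruc M c) ρ')).1 h1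
        rw [show (fun i => evT M c (((p.2 i).lift).eval (tmStruc M c) ρ')) =
          fun i => (p.2 i).eval M (fun m => evT M c (ρ' m)) from
          funext fun i => evT_evalL M c _ _] at h2
        exact h2
      · have h4 : (fun i => evT M c (v i)) =
            fun i => (r.conclArgs i).eval M (fun m => evT M c (ρ' m)) := by
          funext i
          rw [congrFun hv2 i]
          exact evT_evalL M c _ _
        exact congrArg (fun w => (⟨r.concl, w⟩ : (P : S.IndPred) ×
          (Fin (S.arI P) → M.U))) h4
    · rintro ⟨r, hrΦ, ρ, hq, hp, hv⟩
      rw [Sigma.mk.inj_iff] at hv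
      obtain ⟨hP, hvv⟩ := hv
      subst hP
      have hv2 := eq_of_heq hvv
      have hcv : ∀ i, (r.conclArgs i).eval M ρ ∈ Set.range c := by
        intro i
        rw [← congrFun hv2 i]
        exact evT_mem M c hF _
      obtain ⟨ρ₂, hρ₂H, hρ₂c, hρ₂q, hρ₂p⟩ := hR r hrΦ n ρ hcv hq hp
      choose ρ' hρ' using fun m => evT_surj M c (ρ₂ m) (hρ₂H m)
      have hcomp : (fun m => evT M c (ρ' m)) = ρ₂ := funext hρ'
      refine ⟨r.lift, List.mem_map.2 ⟨r, hrΦ, rfl⟩, ρ', ?_, ?_, ?_⟩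
      · intro q hq'
        obtain ⟨q₀, hq₀, rfl⟩ := List.mem_map.1 hq'
        apply (interpP_iff M c q₀.1 _).2
        show (fun i => evT M c (((q₀.2 i).lift).eval (tmStruc M c) ρ')) ∈ M.interpP q₀.1
        rw [show (fun i => evT M c (((q₀.2 i).lift).eval (tmStruc M c) ρ')) =
          fun i => (q₀.2 i).eval M ρ₂ from
          funext fun i => by rw [evT_evalL M c _ ρ', hcomp]]
        exact hρ₂q q₀ hq₀
      · intro p hp'
        obtain ⟨p₀, hp₀, rfl⟩ := List.mem_map.1 hp'
        apply (ih p₀.1 (fun i => ((p₀.2 i).lift).eval (tmStruc M c) ρ')).2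
        show (⟨p₀.1, fun i => evT M c (((p₀.2 i).lift).eval (tmStruc M c) ρ')⟩ :
          (P : S.IndPred) × (Fin (S.arI P) → M.U)) ∈ (step M Φ)^[n] ∅
        rw [show (fun i => evT M c (((p₀.2 i).lift).eval (tmStruc M c) ρ')) =
          fun i => (p₀.2 i).eval M ρ₂ from
          funext fun i => by rw [evT_evalL M c _ ρ', hcomp]]
        exact hρ₂p p₀ hp₀
      · have h4 : v = fun i => ((r.conclArgs i).lift).eval (tmStruc M c) ρ' := by
          funext i
          apply evT_inj M c
          rw [evT_evalL M c _ ρ', hcomp, hρ₂c i, ← congrFun hv2 i]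
        exact congrArg (fun w => (⟨r.concl, w⟩ : (P : S.addConsts.IndPred) ×
          (Fin (S.addConsts.arI P) → (tmStruc M c).U))) h4

theorem tm_standard (Φ : List (ProdRule S)) (hst : Standard M Φ)
    (hF : FnClosed M (Set.range c)) (hR : ∀ r ∈ Φ, RW M Φ (Set.range c) r) :
    Standard (tmStruc M c) (Φ.map ProdRule.lift) := by
  unfold Standard
  rw [lfp_eq_iUnion_s12]
  ext v
  obtain ⟨P, w⟩ := v
  rw [Set.mem_iUnion]
  constructor
  · intro hPw
    have h1 := (interpI_iff M c P w).1 hPw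
    rw [hst, lfp_eq_iUnion_s12] at h1
    obtain ⟨n, hn⟩ := Set.mem_iUnion.1 h1
    exact ⟨n, (stage_iff M c Φ hF hR n P w).2 hn⟩
  · rintro ⟨n, hn⟩
    apply (interpI_iff M c P w).2
    rw [hst, lfp_eq_iUnion_s12]
    exact Set.mem_iUnion.2 ⟨n, (stage_iff M c Φ hF hR n P w).1 hn⟩

theorem sat_transfer (hF : FnClosed M (Set.range c)) :
    ∀ C : Fm S, (∀ p ∈ quantPairs C, QW M (Set.range c) p.1 p.2) →
      ∀ ρ' : ℕ → (tmStruc M c).U,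
        (Sat (tmStruc M c) ρ' C.lift ↔ Sat M (fun m => evT M c (ρ' m)) C) := by
  intro C
  induction C with
  | fals => intro _ ρ'; exact Iff.rfl
  | eq t u =>
    intro _ ρ'
    simp only [Fm.lift, Sat]
    constructor
    · intro h
      rw [← evT_evalL, ← evT_evalL, h]
    · intro h
      apply evT_inj M c
      rw [evT_evalL, evT_evalL]
      exact h
  | pred Q ts =>
    intro _ ρ'
    simp only [Fm.lift, Sat]
    constructor
    · intro h
      have h2 : (fun i => evT M c (Tm.eval (tmStruc M c) ρ' ((ts i).lift))) ∈
          M.interpP Q := (interpP_iff M c Q _).1 h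
      rw [show (fun i => evT M c (Tm.eval (tmStruc M c) ρ' ((ts i).lift))) =
        fun i => Tm.eval M (fun m => evT M c (ρ' m)) (ts i) from
        funext fun i => evT_evalL M c _ _] at h2
      exact h2
    · intro h
      apply (interpP_iff M c Q _).2
      show (fun i => evT M c (Tm.eval (tmStruc M c) ρ' ((ts i).lift))) ∈ M.interpP Q
      rw [show (fun i => evT M c (Tm.eval (tmStruc M c) ρ' ((ts i).lift))) =
        fun i => Tm.eval M (fun m => evT M c (ρ' m)) (ts i) from
        funext fun i => evT_evalL M c _ _]
      exact h
  | ind P ts =>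
    intro _ ρ'
    simp only [Fm.lift, Sat]
    constructor
    · intro h
      have h2 : (⟨P, fun i => evT M c (Tm.eval (tmStruc M c) ρ' ((ts i).lift))⟩ :
          (P : S.IndPred) × (Fin (S.arI P) → M.U)) ∈ M.interpI :=
        (interpI_iff M c P _).1 h
      rw [show (fun i => evT M c (Tm.eval (tmStruc M c) ρ' ((ts i).lift))) =
        fun i => Tm.eval M (fun m => evT M c (ρ' m)) (ts i) from
        funext fun i => evT_evalL M c _ _] at h2
      exact h2
    · intro h
      apply (interpI_iff M c P _).2
      show (⟨P, fun i => evT M c (Tm.eval (tmStruc M c) ρ' ((ts i).lift))⟩ :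
          (P : S.IndPred) × (Fin (S.arI P) → M.U)) ∈ M.interpI
      rw [show (fun i => evT M c (Tm.eval (tmStruc M c) ρ' ((ts i).lift))) =
        fun i => Tm.eval M (fun m => evT M c (ρ' m)) (ts i) from
        funext fun i => evT_evalL M c _ _]
      exact h
  | not C ih =>
    intro hW ρ'
    simp only [Fm.lift, Sat]
    rw [ih hW ρ']
  | and C B ihC ihB =>
    intro hW ρ'
    simp only [Fm.lift, Sat]
    rw [ihC (fun p hp => hW p (by simp [quantPairs, hp])) ρ',
      ihB (fun p hp => hW p (by simp [quantPairs, hp])) ρ']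
  | or C B ihC ihB =>
    intro hW ρ'
    simp only [Fm.lift, Sat]
    rw [ihC (fun p hp => hW p (by simp [quantPairs, hp])) ρ',
      ihB (fun p hp => hW p (by simp [quantPairs, hp])) ρ']
  | imp C B ihC ihB =>
    intro hW ρ'
    simp only [Fm.lift, Sat]
    rw [ihC (fun p hp => hW p (by simp [quantPairs, hp])) ρ',
      ihB (fun p hp => hW p (by simp [quantPairs, hp])) ρ']
  | all n C ih =>
    intro hW ρ'
    have hWn : QW M (Set.range c) n C := hW (n, C) (by simp [quantPairs])
    have hWt : ∀ p ∈ quantPairs C, QW M (Set.range c) p.1 p.2 :=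
      fun p hp => hW p (by simp [quantPairs, hp])
    simp only [Fm.lift, Sat]
    constructor
    · intro h
      by_contra hcon
      obtain ⟨b, hb⟩ := not_forall.1 hcon
      obtain ⟨b', hb'H, hb'⟩ :=
        (hWn (fun m => evT M c (ρ' m)) (fun m => evT_mem M c hF (ρ' m))).2 ⟨b, hb⟩
      obtain ⟨a, rfl⟩ := evT_surj M c b' hb'H
      apply hb'
      have h1 := (ih hWt (update ρ' n a)).1 (h a)
      exact Eq.mp (congrArg (fun ρ => Sat M ρ C) (evT_update M c ρ' n a)) h1
    · intro h a
      apply (ih hWt (update ρ' n a)).2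
      refine Eq.mpr (congrArg (fun ρ => Sat M ρ C) (evT_update M c ρ' n a)) ?_
      exact h (evT M c a)
  | ex n C ih =>
    intro hW ρ'
    have hWn : QW M (Set.range c) n C := hW (n, C) (by simp [quantPairs])
    have hWt : ∀ p ∈ quantPairs C, QW M (Set.range c) p.1 p.2 :=
      fun p hp => hW p (by simp [quantPairs, hp])
    simp only [Fm.lift, Sat]
    constructor
    · rintro ⟨a, ha⟩
      refine ⟨evT M c a, ?_⟩
      have h1 := (ih hWt (update ρ' n a)).1 ha
      exact Eq.mp (congrArg (fun ρ => Sat M ρ C) (evT_update M c ρ' n a)) h1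
    · rintro ⟨b, hb⟩
      obtain ⟨b', hb'H, hb'⟩ :=
        (hWn (fun m => evT M c (ρ' m)) (fun m => evT_mem M c hF (ρ' m))).1 ⟨b, hb⟩
      obtain ⟨a, rfl⟩ := evT_surj M c b' hb'H
      refine ⟨a, ?_⟩
      apply (ih hWt (update ρ' n a)).2
      refine Eq.mpr (congrArg (fun ρ => Sat M ρ C) (evT_update M c ρ' n a)) ?_
      exact hb'

end MainTransfer

/-- for a closed formula `A` of `Σ`, the following are equivalent:
(1) `A` holds in every standard model of `(Σ, Φ)`;
(2) `A` holds in every standard term model of `(Σ_c, Φ)`, where `Σ_c` extends `Σ`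
by countably many fresh constants. -/
theorem stmt12 {S : Signature} [Countable S.Func] [Countable S.Pred]
    [Countable S.IndPred] (Φ : List (ProdRule S)) (A : Fm S) (hA : A.fv = ∅) :
    (∀ M : Struc S, Nonempty M.U → Standard M Φ → ∀ ρ : ℕ → M.U, Sat M ρ A) ↔
      (∀ D : TermModelData S.addConsts,
        Standard D.toStruc (Φ.map ProdRule.lift) →
          ∀ ρ : ℕ → D.toStruc.U, Sat D.toStruc ρ A.lift) := by
  constructor
  · intro h1 D hD ρ
    have hne : Nonempty (Struc.reduct D.toStruc).U :=
      ⟨Quotient.mk D.setoid ⟨.func (Sum.inr 0) (fun i => i.elim0), by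
        simp only [Tm.fv]
        ext m
        simp only [Finset.mem_biUnion, Finset.mem_univ, Finset.notMem_empty, iff_false,
          not_exists]
        exact fun x _ => x.elim0⟩⟩
    have hstd : Standard (Struc.reduct D.toStruc) Φ := (Standard_lift D.toStruc Φ).1 hD
    exact (Sat_lift D.toStruc A ρ).2 (h1 (Struc.reduct D.toStruc) hne hstd ρ)
  · intro h2 M hne hst ρ
    obtain ⟨c, hcρ, hF, hQ, hRW⟩ := exists_hull M Φ A ρ
    have hstT : Standard (tmStruc M c) (Φ.map ProdRule.lift) :=
      tm_standard M c Φ hst hF hRW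
    have hsat : ∀ ρ' : ℕ → (tmStruc M c).U, Sat (tmStruc M c) ρ' A.lift :=
      h2 (Struc.termData (addConstsStruc M c)) hstT
    choose ρ' hρ' using fun m => evT_surj M c (ρ m) (hcρ m)
    have h3 := (sat_transfer M c hF A hQ ρ').1 (hsat ρ')
    rwa [show (fun m => evT M c (ρ' m)) = ρ from funext hρ'] at h3
end
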